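/- arXiv:1204.6600 — 5 statements merged into one kernel-verified Lean document; each statement's English description precedes it below -/
import Mathlib

section
/- For any summable sequence $(a_i)_{i\in\mathbb{Z}}$ of nonnegative real numbers and any real $s \geq 1$, one has $\left(\sum_{i} a_i\right)^s \leq s \sum_{i} a_i \left(\sum_{j \geq i} a_j\right)^{s-1}$. -/
open scoped ENNReal

open Filter Topology

private lemma key_rpow (s : ℝ) (hs : 1 ≤ s) {x y : ℝ} (hy : 0 ≤ y) (hxy : y ≤ x) :
    x ^ s - y ^ s ≤ s * (x ^ (s - 1) * (x - y)) := by
  have hx : 0 ≤ x := hy.trans hxy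
  rcases eq_or_lt_of_le hx with h0 | h0
  · have : y = 0 := le_antisymm (h0 ▸ hxy) hy
    subst this
    rw [← h0, Real.zero_rpow (by linarith : s ≠ 0)]
    simp
  · -- Bernoulli with z = y/x - 1
    have hz : (-1 : ℝ) ≤ y / x - 1 := by
      have : 0 ≤ y / x := div_nonneg hy hx
      linarith
    have hb := one_add_mul_self_le_rpow_one_add hz hs
    have hyx : 1 + (y / x - 1) = y / x := by ring
    rw [hyx] at hb
    have hdiv : (y / x) ^ s = y ^ s / x ^ s := Real.div_rpow hy hx s
    rw [hdiv] at hb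
    have hxs : (0:ℝ) < x ^ s := Real.rpow_pos_of_pos h0 s
    have hb2 : (1 + s * (y / x - 1)) * x ^ s ≤ y ^ s := (le_div_iff₀ hxs).mp hb
    have hx1 : x ^ (s - 1) = x ^ s / x := by
      rw [Real.rpow_sub h0, Real.rpow_one]
    have hxne : x ≠ 0 := ne_of_gt h0
    have expand : (1 + s * (y / x - 1)) * x ^ s = x ^ s + s * (x ^ s / x * (y - x)) := by
      field_simp
    rw [expand] at hb2
    rw [hx1]
    linarith [hb2]

/-- Elementary inequality: for a summable sequence of nonnegative reals indexed by `ℤ`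
and `s ≥ 1`, `(∑ a_i)^s ≤ s * ∑_i a_i (∑_{j ≥ i} a_j)^(s-1)`. -/
theorem stmt_0 (a : ℤ → ℝ) (ha : ∀ i, 0 ≤ a i) (hsum : Summable a)
    (s : ℝ) (hs : 1 ≤ s) :
    (∑' i, a i) ^ s ≤ s * ∑' i : ℤ, a i * (∑' j : {j : ℤ // i ≤ j}, a j.1) ^ (s - 1) := by
  set total := ∑' i, a i with htotal
  set T : ℤ → ℝ := fun i => ∑' j : {j : ℤ // i ≤ j}, a j.1 with hT
  have hT_eq : ∀ i, T i = ∑' j, Set.indicator {j : ℤ | i ≤ j} a j := by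
    intro i
    exact tsum_subtype {j : ℤ | i ≤ j} a
  have hind : ∀ i : ℤ, Summable (Set.indicator {j : ℤ | i ≤ j} a) := by
    intro i; exact hsum.indicator _
  have hTnn : ∀ i, 0 ≤ T i := by
    intro i
    rw [hT_eq]
    exact tsum_nonneg fun j => Set.indicator_nonneg (fun j _ => ha j) j
  have hT_le : ∀ i, T i ≤ total := by
    intro i
    rw [hT_eq]
    exact Summable.tsum_le_tsum (fun j => Set.indicator_le_self' (fun j _ => ha j) j) (hind i) hsum
  have hmono : ∀ i j : ℤ, i ≤ j → T j ≤ T i := by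
    intro i j hij
    rw [hT_eq, hT_eq]
    refine Summable.tsum_le_tsum (fun k => ?_) (hind j) (hind i)
    exact Set.indicator_le_indicator_of_subset (fun x hx => le_trans hij hx) (fun k => ha k) k
  have hstep : ∀ i : ℤ, T i = a i + T (i + 1) := by
    intro i
    rw [hT_eq, hT_eq]
    have hpt : ∀ j : ℤ, Set.indicator {j : ℤ | i ≤ j} a j
        = (if j = i then a i else 0) + Set.indicator {j : ℤ | i + 1 ≤ j} a j := by
      intro j
      by_cases h : j = i
      · subst h
        simp [Set.indicator_of_mem, Set.indicator_of_notMem, Set.mem_setOf_eq]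
      · rcases lt_or_ge j i with h2 | h2
        · rw [Set.indicator_of_notMem (by simpa using not_le.mpr h2),
            Set.indicator_of_notMem (by simp; omega)]
          simp [h]
        · have h3 : i ≤ j := h2
          have h4 : i + 1 ≤ j := by omega
          rw [Set.indicator_of_mem (by simpa using h3), Set.indicator_of_mem (by simpa using h4)]
          simp [h]
    rw [tsum_congr hpt, Summable.tsum_add ⟨a i, hasSum_ite_eq i (a i)⟩ (hind (i + 1)),
      (by simpa using tsum_ite_eq i (fun _ : ℤ => a i) : (∑' b : ℤ, if b = i then a i else 0) = a i)]
  -- the summand of the RHS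
  set g : ℤ → ℝ := fun i => a i * T i ^ (s - 1) with hg
  have hgnn : ∀ i, 0 ≤ g i := fun i => mul_nonneg (ha i) (Real.rpow_nonneg (hTnn i) _)
  have hgle : ∀ i, g i ≤ a i * total ^ (s - 1) := by
    intro i
    exact mul_le_mul_of_nonneg_left
      (Real.rpow_le_rpow (hTnn i) (hT_le i) (by linarith)) (ha i)
  have hgsum : Summable g :=
    Summable.of_nonneg_of_le hgnn hgle (hsum.mul_right _)
  set S := ∑' i, g i with hS
  -- step inequality
  have hterm : ∀ i : ℤ, T i ^ s - T (i + 1) ^ s ≤ s * g i := by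
    intro i
    have h1 : T (i + 1) ≤ T i := hmono i (i + 1) (by omega)
    have h2 := key_rpow s hs (hTnn (i + 1)) h1
    have h3 : T i - T (i + 1) = a i := by linarith [hstep i]
    rw [h3] at h2
    calc T i ^ s - T (i + 1) ^ s ≤ s * (T i ^ (s - 1) * a i) := h2
      _ = s * g i := by rw [hg]; ring_nf
  -- telescoping bound for each N
  have hmain : ∀ N : ℕ, T (-(N : ℤ)) ^ s ≤ s * S + T ((N : ℤ) + 1) ^ s := by
    intro N
    have htel : ∑ k ∈ Finset.range (2 * N + 1),
        (T (-(N : ℤ) + k) ^ s - T (-(N : ℤ) + (k + 1)) ^ s)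
        = T (-(N : ℤ)) ^ s - T ((N : ℤ) + 1) ^ s := by
      have h := Finset.sum_range_sub' (fun k : ℕ => T (-(N : ℤ) + k) ^ s) (2 * N + 1)
      push_cast at h
      have e1 : -(N:ℤ) + 0 = -(N:ℤ) := by ring
      have e2 : -(N:ℤ) + (2*(N:ℤ)+1) = (N:ℤ)+1 := by ring
      rw [e1, e2] at h
      convert h using 2
    have hsum_le : ∑ k ∈ Finset.range (2 * N + 1), g (-(N : ℤ) + k) ≤ S := by
      have hemb : Function.Injective (fun k : ℕ => -(N : ℤ) + k) := by
        intro x y h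
        simpa using h
      calc ∑ k ∈ Finset.range (2 * N + 1), g (-(N : ℤ) + k)
          = ∑ i ∈ (Finset.range (2 * N + 1)).map ⟨fun k : ℕ => -(N : ℤ) + k, hemb⟩, g i := by
            rw [Finset.sum_map]; rfl
        _ ≤ S := Summable.sum_le_tsum _ (fun i _ => hgnn i) hgsum
    have hbound : T (-(N : ℤ)) ^ s - T ((N : ℤ) + 1) ^ s ≤ s * S := by
      rw [← htel]
      calc ∑ k ∈ Finset.range (2 * N + 1),
            (T (-(N : ℤ) + k) ^ s - T (-(N : ℤ) + (k + 1)) ^ s)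
          ≤ ∑ k ∈ Finset.range (2 * N + 1), s * g (-(N : ℤ) + k) := by
            refine Finset.sum_le_sum fun k _ => ?_
            have := hterm (-(N : ℤ) + k)
            convert this using 3
            push_cast
            rfl
            ring
        _ = s * ∑ k ∈ Finset.range (2 * N + 1), g (-(N : ℤ) + k) := by
            rw [Finset.mul_sum]
        _ ≤ s * S := mul_le_mul_of_nonneg_left hsum_le (by linarith)
    linarith
  -- limits
  have hlim1 : Tendsto (fun N : ℕ => T (-(N : ℤ))) atTop (𝓝 total) := by
    have := tendsto_tsum_of_dominated_convergence (𝓕 := atTop)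
      (f := fun (N : ℕ) (j : ℤ) => Set.indicator {j : ℤ | -(N : ℤ) ≤ j} a j)
      (g := a) (bound := a) hsum
      (fun j => ?_) ?_
    · refine this.congr fun N => ?_
      rw [hT_eq]
    · -- pointwise convergence
      refine tendsto_const_nhds.congr' ?_
      filter_upwards [eventually_ge_atTop (j.natAbs)] with N hN
      have hj : -(N : ℤ) ≤ j := by omega
      exact (Set.indicator_of_mem (show j ∈ {j : ℤ | -(N:ℤ) ≤ j} from hj) a).symm
    · filter_upwards with N j
      rw [Real.norm_eq_abs, abs_of_nonneg (Set.indicator_nonneg (fun j _ => ha j) j)]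
      exact Set.indicator_le_self' (fun j _ => ha j) j
  have hlim2 : Tendsto (fun N : ℕ => T ((N : ℤ) + 1)) atTop (𝓝 0) := by
    have := tendsto_tsum_of_dominated_convergence (𝓕 := atTop)
      (f := fun (N : ℕ) (j : ℤ) => Set.indicator {j : ℤ | (N : ℤ) + 1 ≤ j} a j)
      (g := fun _ => (0 : ℝ)) (bound := a) hsum
      (fun j => ?_) ?_
    · have h0 : (∑' _ : ℤ, (0 : ℝ)) = 0 := tsum_zero
      rw [h0] at this
      refine this.congr fun N => ?_
      rw [hT_eq]
    · refine tendsto_const_nhds.congr' ?_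
      filter_upwards [eventually_ge_atTop (j.natAbs)] with N hN
      have hj : j ∉ {j : ℤ | (N:ℤ) + 1 ≤ j} := by simp only [Set.mem_setOf_eq]; omega
      exact (Set.indicator_of_notMem hj a).symm
    · filter_upwards with N j
      rw [Real.norm_eq_abs, abs_of_nonneg (Set.indicator_nonneg (fun j _ => ha j) j)]
      exact Set.indicator_le_self' (fun j _ => ha j) j
  have hspos : (0 : ℝ) < s := by linarith
  have hcont : ContinuousOn (fun x : ℝ => x ^ s) Set.univ := by
    intro x _
    exact (Real.continuousAt_rpow_const x s (Or.inr hspos.le)).continuousWithinAt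
  have hlim1' : Tendsto (fun N : ℕ => T (-(N : ℤ)) ^ s) atTop (𝓝 (total ^ s)) :=
    ((Real.continuousAt_rpow_const total s (Or.inr hspos.le)).tendsto.comp hlim1)
  have hlim2' : Tendsto (fun N : ℕ => s * S + T ((N : ℤ) + 1) ^ s) atTop (𝓝 (s * S)) := by
    have h0 : Tendsto (fun N : ℕ => T ((N : ℤ) + 1) ^ s) atTop (𝓝 ((0:ℝ) ^ s)) :=
      ((Real.continuousAt_rpow_const 0 s (Or.inr hspos.le)).tendsto.comp hlim2)
    rw [Real.zero_rpow (ne_of_gt hspos)] at h0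
    simpa using (tendsto_const_nhds.add h0)
  exact le_of_tendsto_of_tendsto' hlim1' hlim2' hmain
end

section
/- Let $(\Omega,\mathcal{F},\mu;(\mathcal{F}_i)_{i\in\mathbb{Z}})$ be a $\sigma$-finite filtered measure space, $s > 1$, $w$ a bounded integrable nonnegative weight, and $\alpha_i$ nonnegative bounded $\mathcal{F}_i$-measurable functions with only finitely many nonzero. Then $\int_\Omega \big(\sup_{i} \mathcal{E}_i(\overline{\alpha}_i w)\big)^s d\mu \leq C \int_\Omega \big(\sum_{i} \alpha_i \mathcal{E}_i w\big)^s d\mu$, where $\overline{\alpha}_i := \sum_{j\geq i}\alpha_j$ and $C$ depends only on $s$. -/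
open MeasureTheory Set Real
open scoped ENNReal

lemma aux_condExp_ae_le_const {Ω : Type} {m m0 : MeasurableSpace Ω} {μ : Measure Ω}
    (hm : m ≤ m0) [SigmaFinite (μ.trim hm)] {G : Ω → ℝ} (hG : Integrable G μ)
    {M : ℝ} (hGM : ∀ᵐ x ∂μ, G x ≤ M) : ∀ᵐ x ∂μ, (μ[G|m]) x ≤ M := by
  set f := μ[G|m] with hf
  have hmain : ∀ (ε : ℝ), 0 < ε → μ {x | M + ε ≤ f x} = 0 := by
    intro ε hε
    set B : Set Ω := {x | M + ε ≤ f x} with hB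
    have hBmeas : MeasurableSet[m] B :=
      stronglyMeasurable_condExp.measurable measurableSet_Ici
    have hspan : ⋃ n, B ∩ spanningSets (μ.trim hm) n = B := by
      rw [← Set.inter_iUnion, iUnion_spanningSets, Set.inter_univ]
    rw [← hspan]
    refine measure_iUnion_null fun n => ?_
    set A := B ∩ spanningSets (μ.trim hm) n with hA
    have hAm : MeasurableSet[m] A := hBmeas.inter (measurableSet_spanningSets _ n)
    have hAmeas0 : MeasurableSet A := hm _ hAm
    have hAfin : μ A ≠ ∞ := by
      rw [← trim_measurableSet_eq hm hAm]
      exact ((measure_mono Set.inter_subset_right).trans_lt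
        (measure_spanningSets_lt_top (μ.trim hm) n)).ne
    have h1 : (M + ε) * (μ A).toReal ≤ ∫ x in A, f x ∂μ := by
      refine setIntegral_ge_of_const_le_real hAmeas0 hAfin (fun x hx => hx.1) ?_
      exact integrable_condExp.integrableOn
    have h2 : ∫ x in A, f x ∂μ = ∫ x in A, G x ∂μ := setIntegral_condExp hm hG hAm
    have h3 : ∫ x in A, G x ∂μ ≤ M * (μ A).toReal := by
      have : ∫ x in A, G x ∂μ ≤ ∫ _x in A, M ∂μ := by
        refine setIntegral_mono_ae_restrict hG.integrableOn
          (integrableOn_const hAfin) (ae_restrict_of_ae hGM)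
      have h := (by simpa [setIntegral_const, mul_comm] using this : ∫ x in A, G x ∂μ ≤ M * μ.real A); exact h
    have hμA : (μ A).toReal = 0 := by nlinarith [ENNReal.toReal_nonneg (a := μ A)]
    exact (ENNReal.toReal_eq_zero_iff _).1 hμA |>.resolve_right hAfin
  have h4 : ∀ᵐ x ∂μ, ∀ k : ℕ, ¬ (M + 1/(k+1) ≤ f x) := by
    rw [ae_all_iff]
    intro k
    have := hmain (1/(k+1)) (by positivity)
    rw [ae_iff]
    simpa using this
  filter_upwards [h4] with x hx
  by_contra hlt
  push_neg at hlt
  obtain ⟨k, hk⟩ := exists_nat_one_div_lt (sub_pos.2 hlt)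
  exact hx k (by linarith)

lemma aux_weak {Ω : Type} {m0 : MeasurableSpace Ω} {μ : Measure Ω}
    (ℱ : Filtration ℤ m0) (hσ : ∀ i, SigmaFinite (μ.trim (ℱ.le i)))
    {G : Ω → ℝ} (hGi : Integrable G μ) (hGnn : 0 ≤ᵐ[μ] G)
    {t : ℝ} (ht : 0 < t) :
    ENNReal.ofReal t * μ {x | ∃ i : ℤ, t < (μ[G|ℱ i]) x} ≤
      ∫⁻ x in {x | ∃ i : ℤ, t < (μ[G|ℱ i]) x}, ENNReal.ofReal (G x) ∂μ := by
  set f : ℤ → Ω → ℝ := fun i => μ[G|ℱ i] with hfdef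
  set B : ℤ → Set Ω := fun i => {x | t < f i x} with hBdef
  have hBm : ∀ i, MeasurableSet[ℱ i] (B i) := fun i =>
    (stronglyMeasurable_condExp (m := ℱ i)).measurable measurableSet_Ioi
  have hBm0 : ∀ i, MeasurableSet (B i) := fun i => ℱ.le i _ (hBm i)
  -- finite-index weak inequality
  have weakFin : ∀ F : Finset ℤ,
      ENNReal.ofReal t * μ (⋃ i ∈ F, B i) ≤ ∫⁻ x in ⋃ i ∈ F, B i, ENNReal.ofReal (G x) ∂μ := by
    intro F
    classical
    set A : ℤ → Set Ω := fun i => B i \ ⋃ j ∈ F.filter (· < i), B j with hAdef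
    have hAm : ∀ i, MeasurableSet[ℱ i] (A i) := by
      intro i
      refine (hBm i).diff ?_
      refine Finset.measurableSet_biUnion _ fun j hj => ?_
      have hji : j < i := (Finset.mem_filter.1 hj).2
      exact ℱ.mono hji.le _ (hBm j)
    have hAm0 : ∀ i ∈ F, MeasurableSet (A i) := fun i _ => ℱ.le i _ (hAm i)
    have hAB : ∀ i, A i ⊆ B i := fun i => Set.diff_subset
    have hdisj : Set.PairwiseDisjoint (↑F) A := by
      intro i hi j hj hij
      rcases lt_or_gt_of_ne hij with h | h
      · refine Set.disjoint_left.2 fun x hxi hxj => ?_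
        exact hxj.2 (Set.mem_biUnion (Finset.mem_filter.2 ⟨hi, h⟩) (hAB i hxi))
      · refine Set.disjoint_left.2 fun x hxi hxj => ?_
        exact hxi.2 (Set.mem_biUnion (Finset.mem_filter.2 ⟨hj, h⟩) (hAB j hxj))
    have hUnion : ⋃ i ∈ F, A i = ⋃ i ∈ F, B i := by
      refine Set.Subset.antisymm
        (Set.iUnion₂_mono fun i _ => hAB i) (fun x hx => ?_)
      obtain ⟨i, hiF, hxB⟩ := Set.mem_iUnion₂.1 hx
      have hne : (F.filter (fun j => x ∈ B j)).Nonempty :=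
        ⟨i, Finset.mem_filter.2 ⟨hiF, hxB⟩⟩
      set m := (F.filter (fun j => x ∈ B j)).min' hne with hm
      have hmF : m ∈ F ∧ x ∈ B m := by
        have := (F.filter (fun j => x ∈ B j)).min'_mem hne
        exact ⟨(Finset.mem_filter.1 this).1, (Finset.mem_filter.1 this).2⟩
      refine Set.mem_iUnion₂.2 ⟨m, hmF.1, hmF.2, ?_⟩
      intro hxj
      obtain ⟨j, hj, hxBj⟩ := Set.mem_iUnion₂.1 hxj
      simp only [Finset.mem_filter] at hj
      have hjm : m ≤ j := Finset.min'_le _ _ (Finset.mem_filter.2 ⟨hj.1, hxBj⟩)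
      exact absurd hjm (not_le.2 hj.2)
    have perI : ∀ i ∈ F, ENNReal.ofReal t * μ (A i) ≤
        ∫⁻ x in A i, ENNReal.ofReal (G x) ∂μ := by
      intro i hiF
      haveI := hσ i
      have step1 : ENNReal.ofReal t * μ (A i) ≤ ∫⁻ x in A i, ENNReal.ofReal (f i x) ∂μ := by
        rw [← setLIntegral_const (A i) (ENNReal.ofReal t)]
        refine lintegral_mono_ae ((ae_restrict_iff' (ℱ.le i _ (hAm i))).2 ?_)
        exact Filter.Eventually.of_forall fun x hx => ENNReal.ofReal_le_ofReal (hx.1).le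
      have step2 : ∫⁻ x in A i, ENNReal.ofReal (f i x) ∂μ
          = ENNReal.ofReal (∫ x in A i, f i x ∂μ) := by
        rw [ofReal_integral_eq_lintegral_ofReal integrable_condExp.integrableOn
          (ae_restrict_of_ae (condExp_nonneg hGnn))]
      have step3 : ∫ x in A i, f i x ∂μ = ∫ x in A i, G x ∂μ :=
        setIntegral_condExp (ℱ.le i) hGi (hAm i)
      have step4 : ENNReal.ofReal (∫ x in A i, G x ∂μ)
          = ∫⁻ x in A i, ENNReal.ofReal (G x) ∂μ :=
        ofReal_integral_eq_lintegral_ofReal hGi.integrableOn (ae_restrict_of_ae hGnn)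
      rw [step2, step3, step4] at step1
      exact step1
    calc ENNReal.ofReal t * μ (⋃ i ∈ F, B i)
        = ENNReal.ofReal t * ∑ i ∈ F, μ (A i) := by
          rw [← hUnion, measure_biUnion_finset hdisj hAm0]
      _ = ∑ i ∈ F, ENNReal.ofReal t * μ (A i) := Finset.mul_sum _ _ _
      _ ≤ ∑ i ∈ F, ∫⁻ x in A i, ENNReal.ofReal (G x) ∂μ := Finset.sum_le_sum perI
      _ = ∫⁻ x in ⋃ i ∈ F, A i, ENNReal.ofReal (G x) ∂μ :=
          (lintegral_biUnion_finset hdisj hAm0 _).symm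
      _ = ∫⁻ x in ⋃ i ∈ F, B i, ENNReal.ofReal (G x) ∂μ := by rw [hUnion]
  -- pass to the full union over ℤ
  set U : Set Ω := {x | ∃ i : ℤ, t < f i x} with hUdef
  set V : ℕ → Set Ω := fun n => ⋃ i ∈ Finset.Icc (-(n:ℤ)) (n:ℤ), B i with hVdef
  have hVmono : Monotone V := by
    intro a b hab
    refine Set.iUnion₂_subset fun i hi => ?_
    refine Set.subset_iUnion₂_of_subset i ?_ subset_rfl
    simp only [Finset.mem_Icc] at hi ⊢
    omega
  have hVU : ⋃ n, V n = U := by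
    ext x
    simp only [Set.mem_iUnion, hVdef, hUdef, Set.mem_setOf_eq]
    constructor
    · rintro ⟨n, i, _, hxB⟩
      exact ⟨i, hxB⟩
    · rintro ⟨i, hi⟩
      refine ⟨i.natAbs, i, ?_, hi⟩
      simp only [Finset.mem_Icc]
      omega
  have hμU : μ U = ⨆ n, μ (V n) := by
    rw [← hVU]
    exact hVmono.measure_iUnion
  rw [hμU, ENNReal.mul_iSup]
  refine iSup_le fun n => ?_
  refine (weakFin (Finset.Icc (-(n:ℤ)) (n:ℤ))).trans ?_
  refine lintegral_mono_set ?_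
  rw [← hVU]
  exact Set.subset_iUnion V n

lemma aux_young (s : ℝ) (hs : 1 < s) {a b : ℝ} (ha : 0 ≤ a) (hb : 0 ≤ b) :
    a * (s/(s-1) * b^(s-1)) ≤ (1/2) * b^s +
      (s/(s-1) * (2:ℝ)^((1:ℝ)/(s/(s-1)) * s) / s) * a^s := by
  have hs1 : (0:ℝ) < s - 1 := by linarith
  have hs0 : (0:ℝ) < s := by linarith
  set q : ℝ := s/(s-1) with hqdef
  have hq0 : 0 < q := by positivity
  set d : ℝ := (2:ℝ)^((1:ℝ)/q) with hddef
  have hd0 : (0:ℝ) < d := rpow_pos_of_pos (by norm_num) _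
  have hconj : Real.HolderConjugate s q := by
    exact (Real.holderConjugate_iff_eq_conjExponent hs).2 hqdef
  have young := Real.young_inequality_of_nonneg (a := d * a) (b := b ^ (s-1) / d)
    (mul_nonneg hd0.le ha) (div_nonneg (rpow_nonneg hb _) hd0.le) hconj
  have e1 : d * a * (b ^ (s-1) / d) = a * b ^ (s-1) := by
    field_simp
  have e2 : (d * a) ^ s = d ^ s * a ^ s := mul_rpow hd0.le ha
  have e3 : (b ^ (s-1) / d) ^ q = b ^ s / 2 := by
    rw [div_rpow (rpow_nonneg hb _) hd0.le, ← rpow_mul hb]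
    have h1 : (s - 1) * q = s := by rw [hqdef]; field_simp
    have h2 : d ^ q = 2 := by
      rw [hddef, ← rpow_mul (by norm_num : (0:ℝ) ≤ 2), one_div_mul_cancel hq0.ne', rpow_one]
    rw [h1, h2]
  rw [e1, e2, e3] at young
  have e4 : d ^ s = (2:ℝ) ^ ((1:ℝ)/q * s) := by
    rw [hddef, ← rpow_mul (by norm_num : (0:ℝ) ≤ 2)]
  rw [e4] at young
  have := mul_le_mul_of_nonneg_left young hq0.le
  calc a * (q * b ^ (s-1)) = q * (a * b ^ (s-1)) := by ring
    _ ≤ q * ((2:ℝ) ^ ((1:ℝ)/q * s) * a ^ s / s + b ^ s / 2 / q) := this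
    _ = 1 / 2 * b ^ s + q * (2:ℝ) ^ ((1:ℝ)/q * s) / s * a ^ s := by
        field_simp
        ring

lemma aux_doob (s : ℝ) (hs : 1 < s) {Ω : Type} {m0 : MeasurableSpace Ω} (μ : Measure Ω)
    [SigmaFinite μ] (ℱ : Filtration ℤ m0) (hσ : ∀ i, SigmaFinite (μ.trim (ℱ.le i)))
    {G : Ω → ℝ} (hGm : Measurable G) (hGnn : 0 ≤ᵐ[μ] G) (hGi : Integrable G μ)
    {MG : ℝ} (hMG : ∀ᵐ x ∂μ, G x ≤ MG) :
    ∫⁻ x, (⨆ i : ℤ, ENNReal.ofReal ((μ[G|ℱ i]) x)) ^ s ∂μ ≤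
      ENNReal.ofReal (2 * (s/(s-1) * (2:ℝ)^((1:ℝ)/(s/(s-1)) * s) / s)) *
      ∫⁻ x, ENNReal.ofReal (G x ^ s) ∂μ := by
  have hs0 : (0:ℝ) < s := by linarith
  have hs1 : (0:ℝ) < s - 1 := by linarith
  set k : ℝ := s/(s-1) with hkdef
  have hk0 : 0 < k := by positivity
  set c : ℝ := s/(s-1) * (2:ℝ)^((1:ℝ)/(s/(s-1)) * s) / s with hcdef
  have hc0 : 0 < c := by positivity
  set f : ℤ → Ω → ℝ := fun i => μ[G|ℱ i] with hfdef
  set T : Ω → ℝ≥0∞ := fun x => ⨆ i, ENNReal.ofReal (f i x) with hTdef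
  set τ : Ω → ℝ := fun x => (T x).toReal with hτdef
  have hfm : ∀ i, Measurable (f i) := fun i =>
    (stronglyMeasurable_condExp.mono (ℱ.le i)).measurable
  have hTm : Measurable T := Measurable.iSup fun i => (hfm i).ennreal_ofReal
  have hτm : Measurable τ := hTm.ennreal_toReal
  have hτnn : ∀ x, 0 ≤ τ x := fun x => ENNReal.toReal_nonneg
  set MG' : ℝ := max MG 0 with hMG'def
  have hMG'0 : 0 ≤ MG' := le_max_right _ _
  have hfle : ∀ᵐ x ∂μ, ∀ i, f i x ≤ MG' := by
    rw [ae_all_iff]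
    intro i
    haveI := hσ i
    exact aux_condExp_ae_le_const (ℱ.le i) hGi
      (hMG.mono fun x h => h.trans (le_max_left _ _))
  have hTle : ∀ᵐ x ∂μ, T x ≤ ENNReal.ofReal MG' := by
    filter_upwards [hfle] with x hx
    exact iSup_le fun i => ENNReal.ofReal_le_ofReal (hx i)
  have hτT : ∀ᵐ x ∂μ, ENNReal.ofReal (τ x) = T x := by
    filter_upwards [hTle] with x hx
    exact ENNReal.ofReal_toReal (hx.trans_lt ENNReal.ofReal_lt_top).ne
  have hτle : ∀ᵐ x ∂μ, τ x ≤ MG' := by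
    filter_upwards [hTle] with x hx
    simpa [hτdef, ENNReal.toReal_ofReal hMG'0] using
      ENNReal.toReal_mono ENNReal.ofReal_ne_top hx
  set g : Ω → ℝ≥0∞ := fun x => ENNReal.ofReal (G x) with hgdef
  have hgm : Measurable g := hGm.ennreal_ofReal
  -- weak inequality for τ
  have weak' : ∀ t : ℝ, 0 < t → ENNReal.ofReal t * μ {x | t < τ x} ≤
      ∫⁻ x in {x | t < τ x}, g x ∂μ := by
    intro t ht
    set U : Set Ω := {x | ∃ i : ℤ, t < f i x} with hUdef
    have hsub1 : {x | t < τ x} ⊆ U := by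
      intro x hx
      have hx' : t < τ x := hx
      have hTne : T x ≠ ∞ := by
        intro h
        rw [hτdef] at hx'
        simp only [h, ENNReal.toReal_top] at hx'
        exact absurd hx' (not_lt.2 ht.le)
      have h1 : ENNReal.ofReal t < T x := by
        rw [← ENNReal.ofReal_toReal hTne]
        exact ENNReal.ofReal_lt_ofReal_iff_of_nonneg ht.le |>.2 hx'
      obtain ⟨i, hi⟩ := lt_iSup_iff.1 h1
      exact ⟨i, (ENNReal.ofReal_lt_ofReal_iff_of_nonneg ht.le).1 hi⟩
    have hsub2 : ∀ᵐ x ∂μ, x ∈ U → x ∈ {x | t < τ x} := by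
      filter_upwards [hτT] with x hx hxU
      obtain ⟨i, hi⟩ := hxU
      have h1 : ENNReal.ofReal t < ENNReal.ofReal (τ x) := by
        rw [hx]
        exact lt_of_lt_of_le ((ENNReal.ofReal_lt_ofReal_iff_of_nonneg ht.le).2 hi)
          (le_iSup (fun i => ENNReal.ofReal (f i x)) i)
      exact (ENNReal.ofReal_lt_ofReal_iff_of_nonneg ht.le).1 h1
    have hres : μ.restrict U ≤ μ.restrict {x | t < τ x} :=
      Measure.restrict_mono_ae hsub2
    calc ENNReal.ofReal t * μ {x | t < τ x}
        ≤ ENNReal.ofReal t * μ U := by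
          exact mul_le_mul_right (measure_mono hsub1) _
      _ ≤ ∫⁻ x in U, g x ∂μ := aux_weak ℱ hσ hGi hGnn ht
      _ ≤ ∫⁻ x in {x | t < τ x}, g x ∂μ := lintegral_mono' hres le_rfl
  -- layer cake formula
  set I : ℝ≥0∞ := ∫⁻ x, ENNReal.ofReal (τ x ^ s) ∂μ with hIdef
  have layer : I = ∫⁻ t in Ioi (0:ℝ), μ {x | t < τ x} * ENNReal.ofReal (s * t^(s-1)) := by
    have comp : ∀ u : ℝ, 0 ≤ u → u ^ s = ∫ t in (0:ℝ)..u, s * t^(s-1) := by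
      intro u hu
      rw [intervalIntegral.integral_const_mul, integral_rpow (Or.inl (by linarith : (-1:ℝ) < s-1))]
      rw [show s - 1 + 1 = s by ring, Real.zero_rpow hs0.ne', sub_zero]
      field_simp
    have : (fun x => ENNReal.ofReal (τ x ^ s)) =
        fun x => ENNReal.ofReal (∫ t in (0:ℝ)..(τ x), s * t^(s-1)) := by
      funext x
      rw [comp (τ x) (hτnn x)]
    rw [hIdef, this]
    exact lintegral_comp_eq_lintegral_meas_lt_mul μ (Filter.Eventually.of_forall hτnn)
      hτm.aemeasurable
      (fun t _ => (intervalIntegral.intervalIntegrable_rpow' (by linarith : (-1:ℝ) < s-1)).const_mul s)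
      ((ae_restrict_iff' measurableSet_Ioi).2 (Filter.Eventually.of_forall fun t ht => by
        have : (0:ℝ) < t := ht
        positivity))
  have hsetm : ∀ t : ℝ, MeasurableSet {x | t < τ x} :=
    fun t => measurableSet_lt measurable_const hτm
  -- step 1 : use the weak inequality
  have step1 : I ≤ ∫⁻ t in Ioi (0:ℝ),
      ENNReal.ofReal (s * t^(s-2)) * ∫⁻ x in {x | t < τ x}, g x ∂μ := by
    rw [layer]
    refine lintegral_mono_ae ((ae_restrict_iff' measurableSet_Ioi).2
      (Filter.Eventually.of_forall fun t ht => ?_))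
    have ht : (0:ℝ) < t := ht
    have e : ENNReal.ofReal (s * t^(s-1)) =
        ENNReal.ofReal t * ENNReal.ofReal (s * t^(s-2)) := by
      rw [← ENNReal.ofReal_mul ht.le]
      congr 1
      rw [show s - 1 = 1 + (s-2) by ring, Real.rpow_add ht, Real.rpow_one]
      ring
    calc μ {x | t < τ x} * ENNReal.ofReal (s * t^(s-1))
        = (ENNReal.ofReal t * μ {x | t < τ x}) * ENNReal.ofReal (s * t^(s-2)) := by
          rw [e]; ring
      _ ≤ (∫⁻ x in {x | t < τ x}, g x ∂μ) * ENNReal.ofReal (s * t^(s-2)) :=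
          mul_le_mul_left (weak' t ht) _
      _ = ENNReal.ofReal (s * t^(s-2)) * ∫⁻ x in {x | t < τ x}, g x ∂μ := mul_comm _ _
  -- rewrite as a double integral and swap
  set H : ℝ → Ω → ℝ≥0∞ := fun t x =>
    ENNReal.ofReal (s * t^(s-2)) * ({x' | t < τ x'}.indicator g x) with hHdef
  have hHm : Measurable (Function.uncurry H) := by
    have h1 : Measurable fun p : ℝ × Ω => ENNReal.ofReal (s * p.1^(s-2)) := by fun_prop
    have h2 : Measurable fun p : ℝ × Ω => ({x' | p.1 < τ x'}.indicator g p.2) := by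
      have : (fun p : ℝ × Ω => ({x' | p.1 < τ x'}.indicator g p.2)) =
          {p : ℝ × Ω | p.1 < τ p.2}.indicator (fun p => g p.2) := by
        funext p
        simp only [Set.indicator_apply, Set.mem_setOf_eq]
      rw [this]
      exact (hgm.comp measurable_snd).indicator
        (measurableSet_lt measurable_fst (hτm.comp measurable_snd))
    exact h1.mul h2
  have step2 : ∫⁻ t in Ioi (0:ℝ),
      ENNReal.ofReal (s * t^(s-2)) * ∫⁻ x in {x | t < τ x}, g x ∂μ
      = ∫⁻ t in Ioi (0:ℝ), ∫⁻ x, H t x ∂μ := by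
    refine lintegral_congr fun t => ?_
    rw [← lintegral_indicator (hsetm t), ← lintegral_const_mul _ (hgm.indicator (hsetm t))]
  have hswap : ∫⁻ t in Ioi (0:ℝ), ∫⁻ x, H t x ∂μ = ∫⁻ x, ∫⁻ t in Ioi (0:ℝ), H t x ∂volume ∂μ :=
    lintegral_lintegral_swap hHm.aemeasurable
  -- compute the inner integral
  have inner : ∀ x, (∫⁻ t in Ioi (0:ℝ), H t x ∂volume) = g x * ENNReal.ofReal (k * τ x ^ (s-1)) := by
    intro x
    have h1 : (fun t => H t x) =
        (Iio (τ x)).indicator (fun t => ENNReal.ofReal (s * t^(s-2)) * g x) := by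
      funext t
      simp only [hHdef, Set.indicator_apply, Set.mem_setOf_eq, Set.mem_Iio]
      split_ifs with h
      · rfl
      · exact mul_zero _
    rw [h1, lintegral_indicator measurableSet_Iio, Measure.restrict_restrict measurableSet_Iio]
    rw [show Iio (τ x) ∩ Ioi (0:ℝ) = Ioo 0 (τ x) by rw [Set.inter_comm, Set.Ioi_inter_Iio]]
    rw [lintegral_mul_const'' (g x) (by fun_prop : Measurable fun t : ℝ =>
      ENNReal.ofReal (s * t^(s-2))).aemeasurable]
    rw [mul_comm]
    congr 1
    have hint : IntegrableOn (fun t : ℝ => s * t^(s-2)) (Ioo 0 (τ x)) volume := by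
      have h2 := ((intervalIntegral.intervalIntegrable_rpow'
        (by linarith : (-1:ℝ) < s-2) (a := 0) (b := τ x)).const_mul s).1
      exact h2.mono_set Set.Ioo_subset_Ioc_self
    rw [← ofReal_integral_eq_lintegral_ofReal hint
      ((ae_restrict_iff' measurableSet_Ioo).2 (Filter.Eventually.of_forall fun t ht => by
        have : (0:ℝ) < t := ht.1
        positivity))]
    congr 1
    rw [← integral_Ioc_eq_integral_Ioo, ← intervalIntegral.integral_of_le (hτnn x)]
    rw [intervalIntegral.integral_const_mul, integral_rpow (Or.inl (by linarith : (-1:ℝ) < s-2))]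
    rw [show s - 2 + 1 = s - 1 by ring, Real.zero_rpow hs1.ne', sub_zero, hkdef]
    field_simp
  set J : ℝ≥0∞ := ∫⁻ x, g x * ENNReal.ofReal (k * τ x ^ (s-1)) ∂μ with hJdef
  have stepJ : I ≤ J := by
    refine step1.trans ?_
    rw [step2, hswap]
    exact le_of_eq (lintegral_congr fun x => inner x)
  -- finiteness of I
  have hIfin : I ≠ ∞ := by
    have hJbd : J ≤ ENNReal.ofReal (k * MG' ^ (s-1)) * ∫⁻ x, g x ∂μ := by
      rw [← lintegral_const_mul' _ _ ENNReal.ofReal_ne_top]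
      refine lintegral_mono_ae ?_
      filter_upwards [hτle] with x hx
      rw [mul_comm]
      refine mul_le_mul_left (ENNReal.ofReal_le_ofReal ?_) _
      exact mul_le_mul_of_nonneg_left (Real.rpow_le_rpow (hτnn x) hx hs1.le) hk0.le
    have hgfin : (∫⁻ x, g x ∂μ) < ∞ := hGi.lintegral_lt_top
    exact ((stepJ.trans hJbd).trans_lt
      (ENNReal.mul_lt_top ENNReal.ofReal_lt_top hgfin)).ne
  -- Young's inequality step
  set R : ℝ≥0∞ := ∫⁻ x, ENNReal.ofReal (G x ^ s) ∂μ with hRdef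
  have hyoung : ∀ᵐ x ∂μ, g x * ENNReal.ofReal (k * τ x ^ (s-1)) ≤
      ENNReal.ofReal (1/2) * ENNReal.ofReal (τ x ^ s) + ENNReal.ofReal c * ENNReal.ofReal (G x ^ s) := by
    filter_upwards [hGnn] with x hGx
    calc g x * ENNReal.ofReal (k * τ x ^ (s-1))
        = ENNReal.ofReal (G x * (k * τ x ^ (s-1))) := (ENNReal.ofReal_mul hGx).symm
      _ ≤ ENNReal.ofReal (1/2 * τ x ^ s + c * G x ^ s) :=
          ENNReal.ofReal_le_ofReal (aux_young s hs hGx (hτnn x))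
      _ = ENNReal.ofReal (1/2) * ENNReal.ofReal (τ x ^ s)
          + ENNReal.ofReal c * ENNReal.ofReal (G x ^ s) := by
          rw [ENNReal.ofReal_add (mul_nonneg (by norm_num) (Real.rpow_nonneg (hτnn x) s))
              (mul_nonneg hc0.le (Real.rpow_nonneg hGx s)),
            ENNReal.ofReal_mul (by norm_num), ENNReal.ofReal_mul hc0.le]
  have hJle : J ≤ ENNReal.ofReal (1/2) * I + ENNReal.ofReal c * R := by
    refine (lintegral_mono_ae hyoung).trans ?_
    rw [lintegral_add_left (by fun_prop : Measurable fun x =>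
      ENNReal.ofReal (1/2) * ENNReal.ofReal (τ x ^ s))]
    rw [lintegral_const_mul' _ _ ENNReal.ofReal_ne_top,
      lintegral_const_mul' _ _ ENNReal.ofReal_ne_top]
  have hfinal : I ≤ ENNReal.ofReal (2 * c) * R := by
    have h2 : (2:ℝ≥0∞) * I ≤ (2:ℝ≥0∞) * (ENNReal.ofReal (1/2) * I + ENNReal.ofReal c * R) :=
      mul_le_mul_right (stepJ.trans hJle) _
    rw [mul_add, ← mul_assoc, ← mul_assoc] at h2
    have h3 : (2:ℝ≥0∞) * ENNReal.ofReal (1/2) = 1 := by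
      rw [show (2:ℝ≥0∞) = ENNReal.ofReal 2 by simp, ← ENNReal.ofReal_mul (by norm_num)]
      norm_num
    rw [h3, one_mul, two_mul I] at h2
    have h4 : I ≤ (2:ℝ≥0∞) * ENNReal.ofReal c * R :=
      (ENNReal.add_le_add_iff_left hIfin).1 h2
    rwa [show (2:ℝ≥0∞) * ENNReal.ofReal c = ENNReal.ofReal (2 * c) by
      rw [ENNReal.ofReal_mul (by norm_num : (0:ℝ) ≤ 2)]; simp] at h4
  -- conclude
  have hLHS : ∫⁻ x, (⨆ i : ℤ, ENNReal.ofReal ((μ[G|ℱ i]) x)) ^ s ∂μ = I := by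
    refine lintegral_congr_ae ?_
    filter_upwards [hτT] with x hx
    rw [← ENNReal.ofReal_rpow_of_nonneg (hτnn x) hs0.le, hx]
  rw [hLHS]
  exact hfinal


/-- Principal lemma, direction `A₃ ≤ C A₁`: for `s > 1` there is a constant `C`
depending only on `s` such that for every σ-finite filtered measure space, every
bounded integrable nonnegative weight `w`, and nonnegative bounded adapted `α_i`
with only finitely many nonzero,
`∫ (sup_i E_i(ᾱ_i w))^s dμ ≤ C ∫ (∑_i α_i E_i w)^s dμ`, where `ᾱ_i = ∑_{j ≥ i} α_j`. -/
theorem stmt_6 (s : ℝ) (hs : 1 < s) :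
    ∃ C : ℝ, 0 < C ∧
      ∀ (Ω : Type) (m0 : MeasurableSpace Ω) (μ : Measure Ω), SigmaFinite μ →
      ∀ (ℱ : Filtration ℤ m0), (∀ i, SigmaFinite (μ.trim (ℱ.le i))) →
      ∀ w : Ω → ℝ, Measurable w → (∀ x, 0 ≤ w x) → (∃ M, ∀ x, w x ≤ M) →
        Integrable w μ →
      ∀ α : ℤ → Ω → ℝ, (∀ i, Measurable[ℱ i] (α i)) → (∀ i x, 0 ≤ α i x) →
        (∀ i, ∃ M, ∀ x, α i x ≤ M) → {i | α i ≠ 0}.Finite →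
      (∫⁻ x, (⨆ i : ℤ,
          ENNReal.ofReal ((μ[fun y => (∑' j : {j : ℤ // i ≤ j}, α j.1 y) * w y|ℱ i]) x)) ^ s ∂μ)
        ≤ ENNReal.ofReal C *
          ∫⁻ x, ENNReal.ofReal ((∑' i : ℤ, α i x * (μ[w|ℱ i]) x) ^ s) ∂μ := by
  have hs0 : (0:ℝ) < s := by linarith
  have hs1 : (0:ℝ) < s - 1 := by linarith
  refine ⟨2 * (s/(s-1) * (2:ℝ)^((1:ℝ)/(s/(s-1)) * s) / s), by positivity, ?_⟩
  intro Ω m0 μ hμ ℱ hσ w hwm hwnn hwbd hwint α hαm hαnn hαbd hfin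
  haveI := hμ
  obtain ⟨M, hM⟩ := hwbd
  classical
  set S : Finset ℤ := hfin.toFinset with hSdef
  have hαS : ∀ i ∉ S, α i = 0 := fun i hi => by
    by_contra h
    exact hi (hfin.mem_toFinset.2 h)
  choose Mα hMα using hαbd
  have hαm0 : ∀ i, Measurable (α i) := fun i => (hαm i).mono (ℱ.le i) le_rfl
  have hα_int : ∀ j : ℤ, Integrable (fun y => α j y * w y) μ := fun j =>
    hwint.bdd_mul (c := Mα j) (hαm0 j).aestronglyMeasurable (Filter.Eventually.of_forall fun x => by
      rw [Real.norm_eq_abs, abs_of_nonneg (hαnn j x)]; exact hMα j x)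
  set G : Ω → ℝ := fun x => ∑ j ∈ S, α j x * (μ[w|ℱ j]) x with hGdef
  have hterm_int : ∀ j : ℤ, Integrable (fun x => α j x * (μ[w|ℱ j]) x) μ := fun j =>
    integrable_condExp.bdd_mul (c := Mα j) (hαm0 j).aestronglyMeasurable (Filter.Eventually.of_forall fun x => by
      rw [Real.norm_eq_abs, abs_of_nonneg (hαnn j x)]; exact hMα j x)
  have hGint : Integrable G μ := integrable_finset_sum _ (fun j _ => hterm_int j)
  have hGm : Measurable G :=
    Finset.measurable_sum S (fun j _ =>
      (hαm0 j).mul (stronglyMeasurable_condExp.mono (ℱ.le j)).measurable)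
  have hEw_nn : ∀ᵐ x ∂μ, ∀ j : ℤ, 0 ≤ (μ[w|ℱ j]) x :=
    ae_all_iff.2 fun j => condExp_nonneg (Filter.Eventually.of_forall hwnn)
  have hGnn : 0 ≤ᵐ[μ] G := by
    filter_upwards [hEw_nn] with x hx
    exact Finset.sum_nonneg fun j _ => mul_nonneg (hαnn j x) (hx j)
  set M' : ℝ := max M 0 with hM'def
  have hEw_le : ∀ᵐ x ∂μ, ∀ j : ℤ, (μ[w|ℱ j]) x ≤ M' := by
    rw [ae_all_iff]
    intro j
    haveI := hσ j
    exact aux_condExp_ae_le_const (ℱ.le j) hwint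
      (Filter.Eventually.of_forall fun x => (hM x).trans (le_max_left _ _))
  have hGbd : ∀ᵐ x ∂μ, G x ≤ ∑ j ∈ S, (max (Mα j) 0) * M' := by
    filter_upwards [hEw_nn, hEw_le] with x h0 h1
    refine Finset.sum_le_sum fun j _ => ?_
    exact mul_le_mul ((hMα j x).trans (le_max_left _ _)) (h1 j) (h0 j) (le_max_right _ _)
  -- RHS rewrite
  have hRHS : ∀ x, (∑' i : ℤ, α i x * (μ[w|ℱ i]) x) = G x := fun x => by
    rw [hGdef]
    exact tsum_eq_sum (fun i hiS => by rw [show α i = 0 from hαS i hiS]; simp)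
  -- LHS comparison
  have hLHSle : ∀ᵐ x ∂μ, ∀ i : ℤ,
      (μ[fun y => (∑' j : {j : ℤ // i ≤ j}, α j.1 y) * w y|ℱ i]) x ≤ (μ[G|ℱ i]) x := by
    rw [ae_all_iff]
    intro i
    haveI := hσ i
    have hfun : (fun y => (∑' j : {j : ℤ // i ≤ j}, α j.1 y) * w y)
        = ∑ j ∈ S, (if i ≤ j then (fun y => α j y * w y) else 0) := by
      funext y
      have h1 : (∑' j : {j : ℤ // i ≤ j}, α j.1 y)
          = ∑' j : ℤ, Set.indicator {j : ℤ | i ≤ j} (fun j => α j y) j := by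
        exact tsum_subtype {j : ℤ | i ≤ j} (fun j => α j y)
      rw [h1, tsum_eq_sum (s := S) (fun j hj => by
        simp [Set.indicator_apply, show α j = 0 from hαS j hj])]
      rw [Finset.sum_mul, Finset.sum_apply]
      refine Finset.sum_congr rfl fun j _ => ?_
      by_cases hij : i ≤ j
      · simp [Set.indicator_apply, Set.mem_setOf_eq, hij]
      · simp [Set.indicator_apply, Set.mem_setOf_eq, hij]
    have hsum_int1 : ∀ j ∈ S, Integrable (if i ≤ j then (fun y => α j y * w y) else 0) μ := by
      intro j _
      split_ifs with hij
      · exact hα_int j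
      · exact integrable_zero _ _ _
    have hsum_int2 : ∀ j ∈ S,
        Integrable (if i ≤ j then (fun x => α j x * (μ[w|ℱ j]) x) else 0) μ := by
      intro j _
      split_ifs with hij
      · exact hterm_int j
      · exact integrable_zero _ _ _
    have step_a : μ[fun y => (∑' j : {j : ℤ // i ≤ j}, α j.1 y) * w y|ℱ i]
        =ᵐ[μ] ∑ j ∈ S, μ[(if i ≤ j then (fun y => α j y * w y) else 0)|ℱ i] := by
      rw [hfun]
      exact condExp_finset_sum hsum_int1 _
    have step_b : ∀ j ∈ S, μ[(if i ≤ j then (fun y => α j y * w y) else 0)|ℱ i]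
        =ᵐ[μ] μ[(if i ≤ j then (fun x => α j x * (μ[w|ℱ j]) x) else 0)|ℱ i] := by
      intro j _
      split_ifs with hij
      · haveI := hσ j
        calc μ[(fun y => α j y * w y)|ℱ i]
            =ᵐ[μ] μ[μ[(fun y => α j y * w y)|ℱ j]|ℱ i] :=
              (condExp_condExp_of_le (ℱ.mono hij) (ℱ.le j)).symm
          _ =ᵐ[μ] μ[(fun x => α j x * (μ[w|ℱ j]) x)|ℱ i] := by
              refine condExp_congr_ae ?_
              exact condExp_mul_of_stronglyMeasurable_left ((hαm j).stronglyMeasurable)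
                (hα_int j) hwint
      · exact Filter.EventuallyEq.rfl
    have step_c : (∑ j ∈ S, μ[(if i ≤ j then (fun x => α j x * (μ[w|ℱ j]) x) else 0)|ℱ i])
        =ᵐ[μ] μ[(∑ j ∈ S, if i ≤ j then (fun x => α j x * (μ[w|ℱ j]) x) else 0)|ℱ i] :=
      (condExp_finset_sum hsum_int2 _).symm
    have step_d : μ[(∑ j ∈ S, if i ≤ j then (fun x => α j x * (μ[w|ℱ j]) x) else 0)|ℱ i]
        ≤ᵐ[μ] μ[G|ℱ i] := by
      refine condExp_mono ((integrable_finset_sum _ hsum_int2).congr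
        (Filter.Eventually.of_forall fun a => (Finset.sum_apply a S _).symm)) hGint ?_
      filter_upwards [hEw_nn] with x hx
      rw [Finset.sum_apply]
      refine Finset.sum_le_sum fun j _ => ?_
      by_cases hij : i ≤ j
      · simp only [hij, if_true]
        exact le_rfl
      · simp only [hij, if_false, Pi.zero_apply]
        exact mul_nonneg (hαnn j x) (hx j)
    have hsum_eq : ∀ᵐ x ∂μ, ∀ j ∈ S,
        (μ[(if i ≤ j then (fun y => α j y * w y) else 0)|ℱ i]) x
        = (μ[(if i ≤ j then (fun x => α j x * (μ[w|ℱ j]) x) else 0)|ℱ i]) x :=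
      (ae_ball_iff S.countable_toSet).2 step_b
    filter_upwards [step_a, hsum_eq, step_c, step_d] with x ha hb hc hd
    calc (μ[fun y => (∑' j : {j : ℤ // i ≤ j}, α j.1 y) * w y|ℱ i]) x
        = (∑ j ∈ S, μ[(if i ≤ j then (fun y => α j y * w y) else 0)|ℱ i]) x := ha
      _ = (∑ j ∈ S, μ[(if i ≤ j then (fun x => α j x * (μ[w|ℱ j]) x) else 0)|ℱ i]) x := by
          rw [Finset.sum_apply, Finset.sum_apply]
          exact Finset.sum_congr rfl hb
      _ = (μ[(∑ j ∈ S, if i ≤ j then (fun x => α j x * (μ[w|ℱ j]) x) else 0)|ℱ i]) x := hc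
      _ ≤ (μ[G|ℱ i]) x := hd
  -- combine
  calc ∫⁻ x, (⨆ i : ℤ,
        ENNReal.ofReal ((μ[fun y => (∑' j : {j : ℤ // i ≤ j}, α j.1 y) * w y|ℱ i]) x)) ^ s ∂μ
      ≤ ∫⁻ x, (⨆ i : ℤ, ENNReal.ofReal ((μ[G|ℱ i]) x)) ^ s ∂μ := by
        refine lintegral_mono_ae ?_
        filter_upwards [hLHSle] with x hx
        exact ENNReal.rpow_le_rpow
          (iSup_mono fun i => ENNReal.ofReal_le_ofReal (hx i)) hs0.le
    _ ≤ ENNReal.ofReal (2 * (s/(s-1) * (2:ℝ)^((1:ℝ)/(s/(s-1)) * s) / s)) *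
        ∫⁻ x, ENNReal.ofReal (G x ^ s) ∂μ :=
        aux_doob s hs μ ℱ hσ hGm hGnn hGint hGbd
    _ = ENNReal.ofReal (2 * (s/(s-1) * (2:ℝ)^((1:ℝ)/(s/(s-1)) * s) / s)) *
        ∫⁻ x, ENNReal.ofReal ((∑' i : ℤ, α i x * (μ[w|ℱ i]) x) ^ s) ∂μ := by
        congr 1
        refine lintegral_congr fun x => ?_
        rw [hRHS x]
end

section
/- (Carleson embedding, sufficiency) Let $(\Omega,\mathcal{F},\mu;(\mathcal{F}_i)_{i\in\mathbb{N}})$ be a $\sigma$-finite filtered measure space, $\theta \geq 1$, $p \in (0,\infty)$, and for each $i$ let $\nu_i$ be a measure on $\mathcal{F}_i$ and $f_i$ a nonnegative $\mathcal{F}_i$-measurable function. Suppose there is $C_0 > 0$ such that $\sum_{j\geq i} \nu_j(E) \leq C_0\, \mu(E)^\theta$ for all $E \in \mathcal{F}_i$ and all $i$. Then $\big(\sum_i \int_\Omega f_i^{p\theta}\, d\nu_i\big)^{1/(p\theta)} \leq (C_0\theta)^{1/(p\theta)} \|f^*\|_{L^p(d\mu)}$, where $f^* := \sup_i f_i$.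 -/
open MeasureTheory
open scoped ENNReal

-- helper: a * a^(θ-1) = a^θ
lemma carleson_aux_mul_rpow (a : ℝ≥0∞) {θ : ℝ} (hθ : 1 ≤ θ) : a * a ^ (θ - 1) = a ^ θ := by
  rcases eq_or_lt_of_le hθ with h | h
  · simp [← h]
  · have h1 : 0 < θ - 1 := by linarith
    have h0 : 0 < θ := by linarith
    rcases eq_or_ne a 0 with rfl | ha0
    · simp [ENNReal.zero_rpow_of_pos h1, ENNReal.zero_rpow_of_pos h0]
    rcases eq_or_ne a ⊤ with rfl | hat
    · simp [ENNReal.top_rpow_of_pos h1, ENNReal.top_rpow_of_pos h0]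
    calc a * a ^ (θ - 1) = a ^ (1:ℝ) * a ^ (θ - 1) := by rw [ENNReal.rpow_one]
      _ = a ^ (1 + (θ - 1)) := (ENNReal.rpow_add _ _ ha0 hat).symm
      _ = a ^ θ := by ring_nf

lemma carleson_aux_tsum_rpow (a : ℕ → ℝ≥0∞) {θ : ℝ} (hθ : 1 ≤ θ) :
    ∑' k, a k ^ θ ≤ (∑' k, a k) ^ θ := by
  set S := ∑' k, a k with hS
  calc ∑' k, a k ^ θ ≤ ∑' k, a k * S ^ (θ - 1) := by
        refine ENNReal.tsum_le_tsum fun k => ?_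
        rw [← carleson_aux_mul_rpow (a k) hθ]
        exact mul_le_mul_right (ENNReal.rpow_le_rpow (ENNReal.le_tsum k) (by linarith)) _
    _ = S * S ^ (θ - 1) := by rw [ENNReal.tsum_mul_right]
    _ = S ^ θ := carleson_aux_mul_rpow S hθ

lemma carleson_aux_key {Ω : Type*} {m0 : MeasurableSpace Ω} (μ : Measure Ω)
    (ℱ : Filtration ℕ m0) {θ : ℝ} (hθ : 1 ≤ θ)
    (ν : (i : ℕ) → @Measure Ω (ℱ i)) (f : ℕ → Ω → ℝ)
    (hf_meas : ∀ i, Measurable[ℱ i] (f i))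
    (C₀ : ℝ)
    (hcarleson : ∀ (i : ℕ) (E : Set Ω), MeasurableSet[ℱ i] E →
      (∑' j : ℕ, if i ≤ j then ν j E else 0) ≤ ENNReal.ofReal C₀ * μ E ^ θ)
    (t : ℝ) (ht : 0 < t) :
    ∑' i, ν i {x | t < f i x} ≤
      ENNReal.ofReal C₀ * μ {x | ENNReal.ofReal t < ⨆ i, ENNReal.ofReal (f i x)} ^ θ := by
  classical
  set G : ℕ → Set Ω := fun k => {x | t < f k x ∧ ∀ j < k, f j x ≤ t} with hG
  have hGmeas : ∀ k, MeasurableSet[ℱ k] (G k) := by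
    intro k
    have h1 : MeasurableSet[ℱ k] {x | t < f k x} := measurableSet_lt measurable_const (hf_meas k)
    have h2 : MeasurableSet[ℱ k] (⋂ j ∈ Set.Iio k, {x | f j x ≤ t}) := by
      refine MeasurableSet.biInter (Set.to_countable _) fun j hj => ?_
      exact (ℱ.mono (le_of_lt hj)) _ (measurableSet_le (hf_meas j) measurable_const)
    have : G k = {x | t < f k x} ∩ ⋂ j ∈ Set.Iio k, {x | f j x ≤ t} := by
      ext x; simp [hG, Set.mem_iInter]
    rw [this]; exact h1.inter h2
  have hGmeas0 : ∀ k, MeasurableSet (G k) := fun k => (ℱ.le k) _ (hGmeas k)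
  have hGdisj : Pairwise (Function.onFun Disjoint G) := by
    intro k l hkl
    wlog h : k < l generalizing k l
    · exact (this hkl.symm (by omega)).symm
    rw [Function.onFun, Set.disjoint_left]
    rintro x ⟨hxk, _⟩ ⟨_, hxl⟩
    exact absurd (hxl k h) (not_le.mpr hxk)
  -- cover
  have hcover : ∀ i, {x | t < f i x} ⊆ ⋃ k ∈ Finset.range (i + 1), G k := by
    intro i x hx
    have hex : ∃ k, t < f k x := ⟨i, hx⟩
    refine Set.mem_biUnion (Finset.mem_range.mpr (Nat.lt_succ_of_le (Nat.find_le (h := hex) hx))) ?_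
    exact ⟨Nat.find_spec hex, fun j hj => le_of_not_gt (Nat.find_min hex hj)⟩
  have step1 : ∀ i, ν i {x | t < f i x} ≤ ∑' k, if k ≤ i then ν i (G k) else 0 := by
    intro i
    calc ν i {x | t < f i x} ≤ ν i (⋃ k ∈ Finset.range (i + 1), G k) := measure_mono (hcover i)
      _ ≤ ∑ k ∈ Finset.range (i + 1), ν i (G k) := measure_biUnion_finset_le _ _
      _ = ∑' k, if k ≤ i then ν i (G k) else 0 := by
          rw [tsum_eq_sum (s := Finset.range (i + 1))
            (fun k hk => if_neg (by simpa [Nat.lt_succ_iff] using hk))]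
          exact Finset.sum_congr rfl fun k hk =>
            (if_pos (by simpa [Nat.lt_succ_iff] using hk)).symm
  calc ∑' i, ν i {x | t < f i x} ≤ ∑' i, ∑' k, if k ≤ i then ν i (G k) else 0 :=
        ENNReal.tsum_le_tsum step1
    _ = ∑' k, ∑' i, if k ≤ i then ν i (G k) else 0 := ENNReal.tsum_comm
    _ ≤ ∑' k, ENNReal.ofReal C₀ * μ (G k) ^ θ :=
        ENNReal.tsum_le_tsum fun k => hcarleson k (G k) (hGmeas k)
    _ = ENNReal.ofReal C₀ * ∑' k, μ (G k) ^ θ := ENNReal.tsum_mul_left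
    _ ≤ ENNReal.ofReal C₀ * (∑' k, μ (G k)) ^ θ :=
        mul_le_mul_right (carleson_aux_tsum_rpow _ hθ) _
    _ = ENNReal.ofReal C₀ * μ (⋃ k, G k) ^ θ := by rw [measure_iUnion hGdisj hGmeas0]
    _ ≤ ENNReal.ofReal C₀ * μ {x | ENNReal.ofReal t < ⨆ i, ENNReal.ofReal (f i x)} ^ θ := by
        refine mul_le_mul_right (ENNReal.rpow_le_rpow (measure_mono ?_) (by linarith)) _
        rintro x hx
        obtain ⟨k, hk, -⟩ := Set.mem_iUnion.mp hx
        calc ENNReal.ofReal t < ENNReal.ofReal (f k x) :=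
              (ENNReal.ofReal_lt_ofReal_iff_of_nonneg ht.le).mpr hk
          _ ≤ ⨆ i, ENNReal.ofReal (f i x) := le_iSup (fun i => ENNReal.ofReal (f i x)) k

/-- Carleson embedding theorem, sufficiency: if the measures `ν_i` on `F_i` satisfy
`∑_{j ≥ i} ν_j(E) ≤ C₀ μ(E)^θ` for all `E ∈ F_i`, then for every family of nonnegative
adapted functions `f_i`,
`(∑_i ∫ f_i^{pθ} dν_i)^{1/(pθ)} ≤ (C₀ θ)^{1/(pθ)} ‖sup_i f_i‖_{L^p(μ)}`. -/
theorem stmt_7 {Ω : Type*} {m0 : MeasurableSpace Ω} (μ : Measure Ω) [SigmaFinite μ]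
    (ℱ : Filtration ℕ m0) (θ : ℝ) (hθ : 1 ≤ θ) (p : ℝ) (hp : 0 < p)
    (ν : (i : ℕ) → @Measure Ω (ℱ i)) (f : ℕ → Ω → ℝ)
    (hf_meas : ∀ i, Measurable[ℱ i] (f i)) (hf_nonneg : ∀ i x, 0 ≤ f i x)
    (C₀ : ℝ) (hC₀ : 0 < C₀)
    (hcarleson : ∀ (i : ℕ) (E : Set Ω), MeasurableSet[ℱ i] E →
      (∑' j : ℕ, if i ≤ j then ν j E else 0) ≤ ENNReal.ofReal C₀ * μ E ^ θ) :
    (∑' i : ℕ, ∫⁻ x, ENNReal.ofReal (f i x) ^ (p * θ) ∂(ν i)) ^ (1 / (p * θ))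
      ≤ ENNReal.ofReal (C₀ * θ) ^ (1 / (p * θ)) *
        (∫⁻ x, (⨆ i : ℕ, ENNReal.ofReal (f i x)) ^ p ∂μ) ^ (1 / p) := by
  classical
  have hθ0 : (0:ℝ) < θ := lt_of_lt_of_le one_pos hθ
  set q : ℝ := p * θ with hqdef
  have hq : 0 < q := mul_pos hp hθ0
  set F : Ω → ℝ≥0∞ := fun x => ⨆ i, ENNReal.ofReal (f i x) with hF
  have hFmeas : Measurable F :=
    Measurable.iSup fun i => ((hf_meas i).mono (ℱ.le i) le_rfl).ennreal_ofReal
  set A : ℝ≥0∞ := ∫⁻ x, F x ^ p ∂μ with hA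
  have hCθ : ENNReal.ofReal (C₀ * θ) ^ (1 / q) ≠ 0 := by
    refine (ENNReal.rpow_pos ?_ ENNReal.ofReal_ne_top).ne'
    exact ENNReal.ofReal_pos.mpr (mul_pos hC₀ hθ0)
  by_cases hAtop : A = ⊤
  · rw [hAtop, ENNReal.top_rpow_of_pos (by positivity), ENNReal.mul_top hCθ]
    exact le_top
  -- A finite
  have hFae : ∀ᵐ x ∂μ, F x ≠ ⊤ := by
    have h1 : ∀ᵐ x ∂μ, F x ^ p < ⊤ := ae_lt_top (hFmeas.pow_const p) hAtop
    filter_upwards [h1] with x hx hxt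
    rw [hxt, ENNReal.top_rpow_of_pos hp] at hx
    exact absurd hx (lt_irrefl _)
  have key := carleson_aux_key μ ℱ hθ ν f hf_meas C₀ hcarleson
  -- Chebyshev
  have cheb : ∀ t : ℝ, 0 < t →
      μ {x | ENNReal.ofReal t < F x} ≤ A * ENNReal.ofReal t ^ (-p) := by
    intro t ht
    have hx0 : ENNReal.ofReal t ≠ 0 := (ENNReal.ofReal_pos.mpr ht).ne'
    have hε0 : ENNReal.ofReal t ^ p ≠ 0 :=
      (ENNReal.rpow_pos (ENNReal.ofReal_pos.mpr ht) ENNReal.ofReal_ne_top).ne'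
    have hεt : ENNReal.ofReal t ^ p ≠ ⊤ :=
      ENNReal.rpow_ne_top_of_nonneg hp.le ENNReal.ofReal_ne_top
    have hsub : {x | ENNReal.ofReal t < F x} ⊆ {x | ENNReal.ofReal t ^ p ≤ F x ^ p} :=
      fun x hx => ENNReal.rpow_le_rpow (le_of_lt hx) hp.le
    have h2 : ENNReal.ofReal t ^ p * μ {x | ENNReal.ofReal t ^ p ≤ F x ^ p} ≤ A :=
      mul_meas_ge_le_lintegral₀ (hFmeas.pow_const p).aemeasurable _
    calc μ {x | ENNReal.ofReal t < F x} ≤ μ {x | ENNReal.ofReal t ^ p ≤ F x ^ p} :=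
          measure_mono hsub
      _ ≤ A / ENNReal.ofReal t ^ p :=
          (ENNReal.le_div_iff_mul_le (Or.inl hε0) (Or.inl hεt)).mpr (by rwa [mul_comm])
      _ = A * ENNReal.ofReal t ^ (-p) := by
          rw [ENNReal.rpow_neg, div_eq_mul_inv]
  -- pointwise integrand bound
  have hpt : ∀ t : ℝ, 0 < t →
      (∑' i, ν i {x | t < f i x}) * ENNReal.ofReal (t ^ (q - 1)) ≤
        (ENNReal.ofReal C₀ * A ^ (θ - 1)) *
          (μ {x | ENNReal.ofReal t < F x} * ENNReal.ofReal (t ^ (p - 1))) := by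
    intro t ht
    have hx0 : ENNReal.ofReal t ≠ 0 := (ENNReal.ofReal_pos.mpr ht).ne'
    have hxt : ENNReal.ofReal t ≠ ⊤ := ENNReal.ofReal_ne_top
    have hnegt : ENNReal.ofReal t ^ (-p) ≠ ⊤ := by
      rw [ENNReal.rpow_neg]
      exact ENNReal.inv_ne_top.mpr
        (ENNReal.rpow_pos (ENNReal.ofReal_pos.mpr ht) ENNReal.ofReal_ne_top).ne'
    set m := μ {x | ENNReal.ofReal t < F x} with hm
    have expo : -(p * (θ - 1)) + (q - 1) = p - 1 := by rw [hqdef]; ring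
    calc (∑' i, ν i {x | t < f i x}) * ENNReal.ofReal (t ^ (q - 1))
        ≤ (ENNReal.ofReal C₀ * m ^ θ) * ENNReal.ofReal t ^ (q - 1) := by
          rw [ENNReal.ofReal_rpow_of_pos ht]
          exact mul_le_mul_left (key t ht) _
      _ = ENNReal.ofReal C₀ * (m * m ^ (θ - 1)) * ENNReal.ofReal t ^ (q - 1) := by
          rw [carleson_aux_mul_rpow m hθ]
      _ ≤ ENNReal.ofReal C₀ * (m * (A * ENNReal.ofReal t ^ (-p)) ^ (θ - 1)) *
            ENNReal.ofReal t ^ (q - 1) := by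
          refine mul_le_mul_left (mul_le_mul_right (mul_le_mul_right ?_ m) _) _
          exact ENNReal.rpow_le_rpow (cheb t ht) (by linarith : (0:ℝ) ≤ θ - 1)
      _ = ENNReal.ofReal C₀ * (m * (A ^ (θ - 1) * ENNReal.ofReal t ^ (-(p * (θ - 1))))) *
            ENNReal.ofReal t ^ (q - 1) := by
          rw [ENNReal.mul_rpow_of_ne_top hAtop hnegt, ← ENNReal.rpow_mul]
          ring_nf
      _ = (ENNReal.ofReal C₀ * A ^ (θ - 1)) *
            (m * (ENNReal.ofReal t ^ (-(p * (θ - 1))) * ENNReal.ofReal t ^ (q - 1))) := by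
          ring
      _ = (ENNReal.ofReal C₀ * A ^ (θ - 1)) * (m * ENNReal.ofReal (t ^ (p - 1))) := by
          rw [← ENNReal.rpow_add _ _ hx0 hxt, expo, ENNReal.ofReal_rpow_of_pos ht]
  -- layer cake for F
  have hlayer : ENNReal.ofReal p *
      ∫⁻ t in Set.Ioi (0:ℝ), μ {x | ENNReal.ofReal t < F x} * ENNReal.ofReal (t ^ (p - 1)) = A := by
    set h : Ω → ℝ := fun x => (F x).toReal with hh
    have hmble : AEMeasurable h μ := hFmeas.ennreal_toReal.aemeasurable
    have hnn : 0 ≤ᵐ[μ] h := Filter.Eventually.of_forall fun x => ENNReal.toReal_nonneg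
    have hl := lintegral_rpow_eq_lintegral_meas_lt_mul μ hnn hmble hp
    have e1 : ∫⁻ x, ENNReal.ofReal (h x ^ p) ∂μ = A := by
      refine lintegral_congr_ae ?_
      filter_upwards [hFae] with x hx
      simp only [hh]
      rw [← ENNReal.ofReal_rpow_of_nonneg ENNReal.toReal_nonneg hp.le,
        ENNReal.ofReal_toReal hx]
    have e2 : ∀ t ∈ Set.Ioi (0:ℝ),
        μ {a | t < h a} = μ {x | ENNReal.ofReal t < F x} := by
      intro t ht
      refine measure_congr ?_
      filter_upwards [hFae] with a ha
      have : (t < h a) ↔ (ENNReal.ofReal t < F a) :=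
        (ENNReal.ofReal_lt_iff_lt_toReal (le_of_lt ht) ha).symm
      exact propext this
    rw [← e1, hl]
    congr 1
    refine setLIntegral_congr_fun measurableSet_Ioi ?_
    exact fun t ht => by rw [e2 t ht]
  -- measurability for swapping sum and integral
  have hmeas_i : ∀ i, AEMeasurable
      (fun t : ℝ => ν i {x | t < f i x} * ENNReal.ofReal (t ^ (q - 1)))
      (volume.restrict (Set.Ioi (0:ℝ))) := by
    intro i
    have h1 : Measurable fun t : ℝ => ν i {x | t < f i x} :=
      Antitone.measurable fun a b hab =>
        measure_mono fun x hx => lt_of_le_of_lt hab hx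
    have h2 : Measurable fun t : ℝ => ENNReal.ofReal (t ^ (q - 1)) := by fun_prop
    exact (h1.mul h2).aemeasurable
  have hconst_ne_top : ENNReal.ofReal C₀ * A ^ (θ - 1) ≠ ⊤ :=
    ENNReal.mul_ne_top ENNReal.ofReal_ne_top
      (ENNReal.rpow_ne_top_of_nonneg (by linarith) hAtop)
  -- main estimate
  have main : (∑' i : ℕ, ∫⁻ x, ENNReal.ofReal (f i x) ^ q ∂(ν i)) ≤
      ENNReal.ofReal (C₀ * θ) * A ^ θ := by
    have per_i : ∀ i, ∫⁻ x, ENNReal.ofReal (f i x) ^ q ∂(ν i) =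
        ENNReal.ofReal q *
          ∫⁻ t in Set.Ioi (0:ℝ), ν i {x | t < f i x} * ENNReal.ofReal (t ^ (q - 1)) := by
      intro i
      have e : ∀ x, ENNReal.ofReal (f i x) ^ q = ENNReal.ofReal (f i x ^ q) := fun x =>
        ENNReal.ofReal_rpow_of_nonneg (hf_nonneg i x) hq.le
      simp_rw [e]
      exact @lintegral_rpow_eq_lintegral_meas_lt_mul Ω (ℱ i) (ν i) (f i)
        (Filter.Eventually.of_forall (hf_nonneg i)) (hf_meas i).aemeasurable q hq
    calc (∑' i : ℕ, ∫⁻ x, ENNReal.ofReal (f i x) ^ q ∂(ν i))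
        = ENNReal.ofReal q * ∑' i, ∫⁻ t in Set.Ioi (0:ℝ),
            ν i {x | t < f i x} * ENNReal.ofReal (t ^ (q - 1)) := by
          simp_rw [per_i]; rw [ENNReal.tsum_mul_left]
      _ = ENNReal.ofReal q * ∫⁻ t in Set.Ioi (0:ℝ),
            (∑' i, ν i {x | t < f i x}) * ENNReal.ofReal (t ^ (q - 1)) := by
          rw [← lintegral_tsum hmeas_i]
          congr 1
          refine lintegral_congr fun t => ?_
          exact ENNReal.tsum_mul_right
      _ ≤ ENNReal.ofReal q * ∫⁻ t in Set.Ioi (0:ℝ),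
            (ENNReal.ofReal C₀ * A ^ (θ - 1)) *
              (μ {x | ENNReal.ofReal t < F x} * ENNReal.ofReal (t ^ (p - 1))) := by
          refine mul_le_mul_right (lintegral_mono_ae ?_) _
          filter_upwards [self_mem_ae_restrict measurableSet_Ioi] with t ht
          exact hpt t ht
      _ = ENNReal.ofReal q * ((ENNReal.ofReal C₀ * A ^ (θ - 1)) *
            ∫⁻ t in Set.Ioi (0:ℝ),
              μ {x | ENNReal.ofReal t < F x} * ENNReal.ofReal (t ^ (p - 1))) := by
          rw [lintegral_const_mul' _ _ hconst_ne_top]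
      _ = ENNReal.ofReal θ * (ENNReal.ofReal C₀ * A ^ (θ - 1)) *
            (ENNReal.ofReal p *
            ∫⁻ t in Set.Ioi (0:ℝ),
              μ {x | ENNReal.ofReal t < F x} * ENNReal.ofReal (t ^ (p - 1))) := by
          rw [hqdef, ENNReal.ofReal_mul hp.le]
          ring
      _ = ENNReal.ofReal θ * (ENNReal.ofReal C₀ * A ^ (θ - 1)) * A := by rw [hlayer]
      _ = ENNReal.ofReal (C₀ * θ) * A ^ θ := by
          rw [ENNReal.ofReal_mul hC₀.le]
          rw [mul_assoc, mul_assoc, mul_comm (A ^ (θ - 1)) A, carleson_aux_mul_rpow A hθ]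
          ring
  calc (∑' i : ℕ, ∫⁻ x, ENNReal.ofReal (f i x) ^ q ∂(ν i)) ^ (1 / q)
      ≤ (ENNReal.ofReal (C₀ * θ) * A ^ θ) ^ (1 / q) :=
        ENNReal.rpow_le_rpow main (by positivity)
    _ = ENNReal.ofReal (C₀ * θ) ^ (1 / q) * (A ^ θ) ^ (1 / q) :=
        ENNReal.mul_rpow_of_nonneg _ _ (by positivity)
    _ = ENNReal.ofReal (C₀ * θ) ^ (1 / q) * A ^ (1 / p) := by
        have hexp : θ * (1 / q) = 1 / p := by
          rw [hqdef]; field_simp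
        rw [← ENNReal.rpow_mul, hexp]
end

section
/- Let $1 < p < \infty$, $(\Omega,\mathcal{F},\mu;(\mathcal{F}_i)_{i\in\mathbb{Z}})$ a $\sigma$-finite filtered measure space, $w$ a weight, and $\sigma := w^{1-p'}$ also a weight. If there exists $C_2 > 0$ such that $\int_E \big(\sup_{j\geq i}\mathcal{E}_j\sigma\big)^p w\,d\mu \leq C_2^p \int_E \sigma\,d\mu$ for all $E \in \mathcal{F}_i$ of finite measure and all $i$, then $\sup_i \big\|(\mathcal{E}_i w)(\mathcal{E}_i\sigma)^{p-1}\big\|_{L^\infty(d\mu)} \leq C_2^p$. -/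
open MeasureTheory
open scoped ENNReal

private lemma ofReal_max_zero (a : ℝ) : ENNReal.ofReal (max a 0) = ENNReal.ofReal a := by
  rcases le_total a 0 with h | h
  · simp [max_eq_right h, ENNReal.ofReal_of_nonpos h]
  · simp [max_eq_left h]

/-- Testing condition implies the martingale `A_p` condition: if
`∫_E (sup_{j ≥ i} E_j σ)^p w dμ ≤ C₂^p ∫_E σ dμ` for all `E ∈ F_i` of finite measure,
then `(E_i w)(E_i σ)^{p-1} ≤ C₂^p` a.e. for every `i`, where `σ = w^{1-p'}`. -/
theorem stmt_12 {Ω : Type*} {m0 : MeasurableSpace Ω} (μ : Measure Ω) [SigmaFinite μ]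
    (ℱ : Filtration ℤ m0) [∀ i, SigmaFinite (μ.trim (ℱ.le i))]
    (p : ℝ) (hp : 1 < p)
    (w σ : Ω → ℝ) (hw_meas : Measurable w) (hw_nonneg : ∀ x, 0 ≤ w x)
    (hw_int : ∀ (i : ℤ) (s : Set Ω), MeasurableSet[ℱ i] s → μ s < ∞ → IntegrableOn w s μ)
    (hσ_def : ∀ x, σ x = w x ^ (1 - p / (p - 1)))
    (hσ_int : ∀ (i : ℤ) (s : Set Ω), MeasurableSet[ℱ i] s → μ s < ∞ → IntegrableOn σ s μ)
    (C₂ : ℝ) (hC₂ : 0 < C₂)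
    (htest : ∀ (i : ℤ) (E : Set Ω), MeasurableSet[ℱ i] E → μ E < ∞ →
      (∫⁻ x in E, (⨆ j : ℤ, ⨆ _ : i ≤ j, ENNReal.ofReal ((μ[σ|ℱ j]) x)) ^ p *
          ENNReal.ofReal (w x) ∂μ)
        ≤ ENNReal.ofReal (C₂ ^ p) * ∫⁻ x in E, ENNReal.ofReal (σ x) ∂μ) :
    ∀ i : ℤ, ∀ᵐ x ∂μ, (μ[w|ℱ i]) x * ((μ[σ|ℱ i]) x) ^ (p - 1) ≤ C₂ ^ p := by
  intro i
  have hp0 : (0 : ℝ) ≤ p := by linarith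
  have hp1 : p - 1 ≠ 0 := by intro h; linarith [sub_eq_zero.mp h]
  have hCp : (0 : ℝ) < C₂ ^ p := Real.rpow_pos_of_pos hC₂ p
  -- trivial cases: condexp is 0 when the function is not integrable
  by_cases hσI : Integrable σ μ
  swap
  · rw [condExp_of_not_integrable hσI]
    filter_upwards with x
    simp [Real.zero_rpow hp1, le_of_lt hCp]
  by_cases hwI : Integrable w μ
  swap
  · rw [condExp_of_not_integrable hwI]
    filter_upwards with x
    simp [le_of_lt hCp]
  -- main case
  have hσ_nonneg : ∀ x, 0 ≤ σ x := fun x => by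
    rw [hσ_def x]; exact Real.rpow_nonneg (hw_nonneg x) _
  have hm : (ℱ i : MeasurableSpace Ω) ≤ m0 := ℱ.le i
  haveI : SigmaFinite (μ.trim hm) := inferInstance
  set F : Ω → ℝ := μ[σ|ℱ i] with hF_def
  set G : Ω → ℝ := μ[w|ℱ i] with hG_def
  have hF_nonneg : 0 ≤ᵐ[μ] F := condExp_nonneg (Filter.Eventually.of_forall hσ_nonneg)
  have hG_nonneg : 0 ≤ᵐ[μ] G := condExp_nonneg (Filter.Eventually.of_forall hw_nonneg)
  have hF_meas : Measurable[ℱ i] F := stronglyMeasurable_condExp.measurable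
  have hG_meas : Measurable[ℱ i] G := stronglyMeasurable_condExp.measurable
  have hFI : Integrable F μ := integrable_condExp
  have hGI : Integrable G μ := integrable_condExp
  -- Step 1: the testing condition with the condexp at level i, and σ replaced by F on the RHS
  have hstep : ∀ E : Set Ω, MeasurableSet[ℱ i] E → μ E < ∞ →
      (∫⁻ x in E, (ENNReal.ofReal (F x)) ^ p * ENNReal.ofReal (w x) ∂μ)
        ≤ ENNReal.ofReal (C₂ ^ p) * ∫⁻ x in E, ENNReal.ofReal (F x) ∂μ := by
    intro E hE hEfin
    have h1 : (∫⁻ x in E, (ENNReal.ofReal (F x)) ^ p * ENNReal.ofReal (w x) ∂μ)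
        ≤ ∫⁻ x in E, (⨆ j : ℤ, ⨆ _ : i ≤ j, ENNReal.ofReal ((μ[σ|ℱ j]) x)) ^ p *
            ENNReal.ofReal (w x) ∂μ := by
      refine lintegral_mono fun x => ?_
      refine mul_le_mul_left (ENNReal.rpow_le_rpow ?_ hp0) _
      exact le_iSup₂ (f := fun j (_ : i ≤ j) => ENNReal.ofReal ((μ[σ|ℱ j]) x)) i le_rfl
    have h2 := htest i E hE hEfin
    have h3 : (∫⁻ x in E, ENNReal.ofReal (σ x) ∂μ) = ∫⁻ x in E, ENNReal.ofReal (F x) ∂μ := by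
      rw [← ofReal_integral_eq_lintegral_ofReal (hσI.integrableOn)
          (ae_restrict_of_ae (Filter.Eventually.of_forall hσ_nonneg)),
        ← ofReal_integral_eq_lintegral_ofReal (hFI.integrableOn) (ae_restrict_of_ae hF_nonneg),
        setIntegral_condExp hm hσI hE]
    calc (∫⁻ x in E, (ENNReal.ofReal (F x)) ^ p * ENNReal.ofReal (w x) ∂μ)
        ≤ _ := h1
      _ ≤ ENNReal.ofReal (C₂ ^ p) * ∫⁻ x in E, ENNReal.ofReal (σ x) ∂μ := h2
      _ = ENNReal.ofReal (C₂ ^ p) * ∫⁻ x in E, ENNReal.ofReal (F x) ∂μ := by rw [h3]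
  -- Step 2: truncation: for each N, pointwise a.e. bound
  have hstep2 : ∀ N : ℕ, ∀ᵐ x ∂μ,
      ENNReal.ofReal (min ((max (F x) 0) ^ p) (N : ℝ) * G x)
        ≤ ENNReal.ofReal (C₂ ^ p) * ENNReal.ofReal (F x) := by
    intro N
    set φ : Ω → ℝ := fun x => min ((max (F x) 0) ^ p) (N : ℝ) with hφ_def
    have hφ_meas : Measurable[ℱ i] φ :=
      ((Real.continuous_rpow_const hp0).measurable.comp
        (hF_meas.max measurable_const)).min measurable_const
    have hφ_sm : StronglyMeasurable[ℱ i] φ := hφ_meas.stronglyMeasurable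
    have hφ_nonneg : ∀ x, 0 ≤ φ x := fun x =>
      le_min (Real.rpow_nonneg (le_max_right _ _) _) (Nat.cast_nonneg N)
    have hφ_le : ∀ x, φ x ≤ N := fun x => min_le_right _ _
    have hφ_bdd : ∃ C, ∀ x, ‖φ x‖ ≤ C :=
      ⟨N, fun x => by rw [Real.norm_eq_abs, abs_of_nonneg (hφ_nonneg x)]; exact hφ_le x⟩
    have hφw_int : Integrable (φ * w) μ :=
      hwI.bdd_mul ((hφ_sm.mono hm).aestronglyMeasurable) (Filter.Eventually.of_forall hφ_bdd.choose_spec)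
    have hφG_int : Integrable (fun x => φ x * G x) μ :=
      hGI.bdd_mul ((hφ_sm.mono hm).aestronglyMeasurable) (Filter.Eventually.of_forall hφ_bdd.choose_spec)
    have hpull : μ[φ * w|ℱ i] =ᵐ[μ] φ * G :=
      condExp_mul_of_stronglyMeasurable_left hφ_sm hφw_int hwI
    -- set lintegral inequality for the truncated functions
    have hsets : ∀ s : Set Ω, MeasurableSet[ℱ i] s → μ s < ∞ →
        (∫⁻ x in s, ENNReal.ofReal (φ x * G x) ∂μ)
          ≤ ∫⁻ x in s, ENNReal.ofReal (C₂ ^ p) * ENNReal.ofReal (F x) ∂μ := by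
      intro s hs hsfin
      have e1 : (∫⁻ x in s, ENNReal.ofReal (φ x * G x) ∂μ)
          = ENNReal.ofReal (∫ x in s, φ x * G x ∂μ) := by
        rw [ofReal_integral_eq_lintegral_ofReal hφG_int.integrableOn
          (ae_restrict_of_ae (hG_nonneg.mono fun x hx => mul_nonneg (hφ_nonneg x) hx))]
      have e2 : (∫ x in s, φ x * G x ∂μ) = ∫ x in s, φ x * w x ∂μ := by
        calc (∫ x in s, φ x * G x ∂μ) = ∫ x in s, (μ[φ * w|ℱ i]) x ∂μ :=
              integral_congr_ae (ae_restrict_of_ae (hpull.symm.mono fun x hx => hx))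
          _ = ∫ x in s, (φ * w) x ∂μ := setIntegral_condExp hm hφw_int hs
          _ = ∫ x in s, φ x * w x ∂μ := rfl
      have e3 : ENNReal.ofReal (∫ x in s, φ x * w x ∂μ)
          = ∫⁻ x in s, ENNReal.ofReal (φ x * w x) ∂μ :=
        ofReal_integral_eq_lintegral_ofReal hφw_int.integrableOn
          (ae_restrict_of_ae (Filter.Eventually.of_forall fun x =>
            mul_nonneg (hφ_nonneg x) (hw_nonneg x)))
      have e4 : (∫⁻ x in s, ENNReal.ofReal (φ x * w x) ∂μ)
          ≤ ∫⁻ x in s, (ENNReal.ofReal (F x)) ^ p * ENNReal.ofReal (w x) ∂μ := by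
        refine lintegral_mono fun x => ?_
        rw [ENNReal.ofReal_mul (hφ_nonneg x)]
        refine mul_le_mul_left ?_ _
        have : ENNReal.ofReal (φ x) ≤ ENNReal.ofReal ((max (F x) 0) ^ p) :=
          ENNReal.ofReal_le_ofReal (min_le_left _ _)
        refine this.trans (le_of_eq ?_)
        rw [← ENNReal.ofReal_rpow_of_nonneg (le_max_right _ _) hp0, ofReal_max_zero]
      rw [e1, e2, e3, lintegral_const_mul' _ _ ENNReal.ofReal_ne_top]
      exact e4.trans (hstep s hs hsfin)
    -- transfer to the trimmed measure and conclude a pointwise a.e. bound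
    set f₁ : Ω → ℝ≥0∞ := fun x => ENNReal.ofReal (φ x * G x) with hf₁_def
    set f₂ : Ω → ℝ≥0∞ := fun x => ENNReal.ofReal (C₂ ^ p) * ENNReal.ofReal (F x) with hf₂_def
    have hf₁_meas : Measurable[ℱ i] f₁ :=
      ENNReal.measurable_ofReal.comp (hφ_meas.mul hG_meas)
    have hf₂_meas : Measurable[ℱ i] f₂ :=
      (ENNReal.measurable_ofReal.comp hF_meas).const_mul _
    have htrim : f₁ ≤ᵐ[μ.trim hm] f₂ := by
      refine ae_le_of_forall_setLIntegral_le_of_sigmaFinite hf₁_meas fun s hs hsfin => ?_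
      rw [restrict_trim hm μ hs, lintegral_trim hm hf₁_meas, lintegral_trim hm hf₂_meas]
      rw [trim_measurableSet_eq hm hs] at hsfin
      exact hsets s hs hsfin
    exact ae_le_of_ae_le_trim htrim
  -- Step 3: combine over all N and conclude
  have h_all : ∀ᵐ x ∂μ, ∀ N : ℕ,
      ENNReal.ofReal (min ((max (F x) 0) ^ p) (N : ℝ) * G x)
        ≤ ENNReal.ofReal (C₂ ^ p) * ENNReal.ofReal (F x) := ae_all_iff.mpr hstep2
  filter_upwards [h_all, hF_nonneg, hG_nonneg] with x hx hFx hGx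
  simp only [Pi.zero_apply] at hFx hGx
  rcases eq_or_lt_of_le hFx with hF0 | hF0
  · rw [← hF0, Real.zero_rpow hp1, mul_zero]
    exact le_of_lt hCp
  · have hN := hx ⌈(F x) ^ p⌉₊
    rw [max_eq_left hFx, min_eq_left (Nat.le_ceil _),
      ← ENNReal.ofReal_mul (le_of_lt hCp)] at hN
    have hreal : (F x) ^ p * G x ≤ C₂ ^ p * F x :=
      (ENNReal.ofReal_le_ofReal_iff (mul_nonneg (le_of_lt hCp) hFx)).mp hN
    have hpow : (F x) ^ p = (F x) ^ (p - 1) * F x := by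
      rw [← Real.rpow_add_one (ne_of_gt hF0) (p - 1), sub_add_cancel]
    rw [hpow] at hreal
    have : G x * (F x) ^ (p - 1) * F x ≤ C₂ ^ p * F x := by
      calc G x * (F x) ^ (p - 1) * F x = (F x) ^ (p - 1) * F x * G x := by ring
        _ ≤ C₂ ^ p * F x := hreal
    exact le_of_mul_le_mul_right this hF0
end

section
/- (Principal set construction: sparseness) Let $(\Omega,\mathcal{F},\mu;(\mathcal{F}_i)_{i\in\mathbb{Z}})$ be a $\sigma$-finite filtered measure space, $\sigma$ a weight, $i \in \mathbb{Z}$, $k \in \mathbb{Z}$, and $P_0 \in \mathcal{F}_i$ with $0 < \mu(P_0) < \infty$ such that $2^{k-1} < \mathcal{E}_i[1_{P_0}\sigma] \leq 2^k$ on $P_0$. Define the stopping time $\tau := \inf\{j \geq i : \mathcal{E}_j[1_{P_0}\sigma] > 2^{k+1}\}$. Then $\mu(P_0 \cap \{\tau < \infty\}) \leq \tfrac{1}{2}\mu(P_0)$, hence $\mu(P_0) \leq 2\,\mu(P_0 \setminus \{\tau < \infty\})$. -/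
open MeasureTheory
open scoped ENNReal

/-- Principal set construction, sparseness: if `P₀ ∈ F_i` has `0 < μ(P₀) < ∞` and
`2^{k-1} < E_i[1_{P₀} σ] ≤ 2^k` on `P₀`, then the stopping set
`{τ < ∞} = {∃ j ≥ i, E_j[1_{P₀} σ] > 2^{k+1}}` satisfies
`μ(P₀ ∩ {τ < ∞}) ≤ μ(P₀)/2`, hence `μ(P₀) ≤ 2 μ(P₀ \ {τ < ∞})`. -/
theorem stmt_19 {Ω : Type*} {m0 : MeasurableSpace Ω} (μ : Measure Ω) [SigmaFinite μ]
    (ℱ : Filtration ℤ m0) [∀ i, SigmaFinite (μ.trim (ℱ.le i))]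
    (σ : Ω → ℝ) (hσ_meas : Measurable σ) (hσ_nonneg : ∀ x, 0 ≤ σ x)
    (hσ_int : ∀ (i : ℤ) (s : Set Ω), MeasurableSet[ℱ i] s → μ s < ∞ → IntegrableOn σ s μ)
    (i k : ℤ) (P₀ : Set Ω) (hP₀ : MeasurableSet[ℱ i] P₀)
    (hP₀pos : 0 < μ P₀) (hP₀fin : μ P₀ < ∞)
    (hbounds : ∀ᵐ x ∂μ, x ∈ P₀ →
      (2 : ℝ) ^ (k - 1) < (μ[P₀.indicator σ|ℱ i]) x ∧
        (μ[P₀.indicator σ|ℱ i]) x ≤ (2 : ℝ) ^ k) :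
    μ (P₀ ∩ {x | ∃ j, i ≤ j ∧ (2 : ℝ) ^ (k + 1) < (μ[P₀.indicator σ|ℱ j]) x})
        ≤ μ P₀ / 2 ∧
      μ P₀ ≤ 2 *
        μ (P₀ \ {x | ∃ j, i ≤ j ∧ (2 : ℝ) ^ (k + 1) < (μ[P₀.indicator σ|ℱ j]) x}) := by
  classical
  set f : Ω → ℝ := P₀.indicator σ with hf_def
  have hP₀m : MeasurableSet P₀ := ℱ.le i P₀ hP₀
  have hσP₀ : IntegrableOn σ P₀ μ := hσ_int i P₀ hP₀ hP₀fin
  have hf_int : Integrable f μ := hσP₀.integrable_indicator hP₀m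
  have hf_nonneg : 0 ≤ᵐ[μ] f :=
    Filter.Eventually.of_forall fun x => Set.indicator_nonneg (fun y _ => hσ_nonneg y) x
  set A : ℕ → Set Ω := fun n => {x | (2:ℝ)^(k+1) < (μ[f|ℱ (i + n)]) x} with hA_def
  set B : ℕ → Set Ω := fun n => A n \ ⋃ m < n, A m with hB_def
  set S : Set Ω := {x | ∃ j, i ≤ j ∧ (2:ℝ)^(k+1) < (μ[f|ℱ j]) x} with hS_def
  have hAmF : ∀ n : ℕ, MeasurableSet[ℱ (i + (n:ℤ))] (A n) := fun n =>
    measurableSet_lt measurable_const stronglyMeasurable_condExp.measurable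
  have hAm : ∀ n, MeasurableSet (A n) := fun n => ℱ.le _ _ (hAmF n)
  have hBmF : ∀ n : ℕ, MeasurableSet[ℱ (i + (n:ℤ))] (B n) := by
    intro n
    refine (hAmF n).diff ?_
    refine MeasurableSet.biUnion (Set.to_countable _) fun m hm => ?_
    have hmn : m < n := hm
    exact ℱ.mono (add_le_add_right (by exact_mod_cast hmn.le) i) _ (hAmF m)
  have hBm : ∀ n, MeasurableSet (B n) := fun n => ℱ.le _ _ (hBmF n)
  have hBsub : ∀ n, B n ⊆ A n := fun n => Set.diff_subset
  have hBdisj : Pairwise (Function.onFun Disjoint B) := by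
    intro m n hmn
    rcases lt_or_gt_of_ne hmn with h | h
    · refine Set.disjoint_left.2 fun x hxm hxn => ?_
      exact hxn.2 (Set.mem_biUnion h (hBsub m hxm))
    · refine Set.disjoint_left.2 fun x hxm hxn => ?_
      exact hxm.2 (Set.mem_biUnion h (hBsub n hxn))
  have hBU : (⋃ n, B n) = ⋃ n, A n := by
    apply Set.Subset.antisymm (Set.iUnion_mono hBsub)
    intro x hx
    rw [Set.mem_iUnion] at hx
    have hex : ∃ n, x ∈ A n := hx
    refine Set.mem_iUnion.2 ⟨Nat.find hex, Nat.find_spec hex, ?_⟩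
    intro h
    simp only [Set.mem_iUnion] at h
    obtain ⟨m, hm, hxm⟩ := h
    exact Nat.find_min hex hm hxm
  have hSU : S = ⋃ n, A n := by
    ext x
    simp only [hS_def, Set.mem_setOf_eq, Set.mem_iUnion, hA_def]
    constructor
    · rintro ⟨j, hij, hj⟩
      refine ⟨(j - i).toNat, ?_⟩
      rwa [show i + ((j - i).toNat : ℤ) = j by omega]
    · rintro ⟨n, hn⟩
      exact ⟨i + n, by omega, hn⟩
  have hSm : MeasurableSet S := hSU ▸ MeasurableSet.iUnion hAm
  set ε : ℝ≥0∞ := ENNReal.ofReal ((2:ℝ)^(k+1)) with hε_def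
  set c : ℝ≥0∞ := ENNReal.ofReal ((2:ℝ)^k) with hc_def
  have h2k : (0:ℝ) < 2^k := zpow_pos (by norm_num) k
  have key : ∀ n : ℕ, ε * μ (B n) ≤ ∫⁻ x in B n, ENNReal.ofReal (f x) ∂μ := by
    intro n
    have hg_int : Integrable (μ[f|ℱ (i+(n:ℤ))]) μ := integrable_condExp
    have hg_nn : 0 ≤ᵐ[μ] μ[f|ℱ (i+(n:ℤ))] := condExp_nonneg hf_nonneg
    have h1 : ε * μ (B n) ≤ ∫⁻ x in B n, ENNReal.ofReal ((μ[f|ℱ (i+(n:ℤ))]) x) ∂μ := by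
      have hle : ∀ᵐ x ∂(μ.restrict (B n)),
          ε ≤ ENNReal.ofReal ((μ[f|ℱ (i+(n:ℤ))]) x) := by
        refine (ae_restrict_iff' (hBm n)).2 (Filter.Eventually.of_forall fun x hx => ?_)
        exact ENNReal.ofReal_le_ofReal (le_of_lt (hBsub n hx))
      calc ε * μ (B n) = ∫⁻ _ in B n, ε ∂μ := (setLIntegral_const _ _).symm
        _ ≤ ∫⁻ x in B n, ENNReal.ofReal ((μ[f|ℱ (i+(n:ℤ))]) x) ∂μ := lintegral_mono_ae hle
    have e1 : ∫⁻ x in B n, ENNReal.ofReal ((μ[f|ℱ (i+(n:ℤ))]) x) ∂μ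
        = ENNReal.ofReal (∫ x in B n, (μ[f|ℱ (i+(n:ℤ))]) x ∂μ) :=
      (ofReal_integral_eq_lintegral_ofReal hg_int.integrableOn (ae_restrict_of_ae hg_nn)).symm
    have e2 : ∫ x in B n, (μ[f|ℱ (i+(n:ℤ))]) x ∂μ = ∫ x in B n, f x ∂μ :=
      setIntegral_condExp (ℱ.le (i+(n:ℤ))) hf_int (hBmF n)
    have e3 : ENNReal.ofReal (∫ x in B n, f x ∂μ) = ∫⁻ x in B n, ENNReal.ofReal (f x) ∂μ :=
      ofReal_integral_eq_lintegral_ofReal hf_int.integrableOn (ae_restrict_of_ae hf_nonneg)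
    calc ε * μ (B n) ≤ _ := h1
      _ = _ := e1
      _ = _ := by rw [e2]
      _ = _ := e3
  have hsum : ε * μ S ≤ ∫⁻ x, ENNReal.ofReal (f x) ∂μ := by
    have h1 : μ S = ∑' n, μ (B n) := by
      rw [hSU, ← hBU, measure_iUnion hBdisj hBm]
    calc ε * μ S = ∑' n, ε * μ (B n) := by rw [h1, ENNReal.tsum_mul_left]
      _ ≤ ∑' n, ∫⁻ x in B n, ENNReal.ofReal (f x) ∂μ := ENNReal.tsum_le_tsum key
      _ = ∫⁻ x in ⋃ n, B n, ENNReal.ofReal (f x) ∂μ := (lintegral_iUnion hBm hBdisj _).symm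
      _ ≤ ∫⁻ x, ENNReal.ofReal (f x) ∂μ := setLIntegral_le_lintegral _ _
  have htot : ∫⁻ x, ENNReal.ofReal (f x) ∂μ ≤ c * μ P₀ := by
    have e0 : ∫⁻ x, ENNReal.ofReal (f x) ∂μ = ENNReal.ofReal (∫ x, f x ∂μ) :=
      (ofReal_integral_eq_lintegral_ofReal hf_int hf_nonneg).symm
    have e1 : ∫ x, f x ∂μ = ∫ x in P₀, σ x ∂μ := integral_indicator hP₀m
    have e2 : ∫ x in P₀, σ x ∂μ = ∫ x in P₀, f x ∂μ :=
      setIntegral_congr_fun hP₀m fun x hx => (Set.indicator_of_mem hx σ).symm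
    have e3 : ∫ x in P₀, f x ∂μ = ∫ x in P₀, (μ[f|ℱ i]) x ∂μ :=
      (setIntegral_condExp (ℱ.le i) hf_int hP₀).symm
    have e4 : ∫ x in P₀, (μ[f|ℱ i]) x ∂μ ≤ ∫ x in P₀, (2:ℝ)^k ∂μ := by
      refine integral_mono_ae integrable_condExp.integrableOn
        (integrableOn_const hP₀fin.ne) ?_
      exact (ae_restrict_iff' hP₀m).2 (hbounds.mono fun x hx hxP => (hx hxP).2)
    have e5 : ∫ x in P₀, (2:ℝ)^k ∂μ = (μ P₀).toReal * (2:ℝ)^k := by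
      rw [setIntegral_const]; simp [smul_eq_mul, Measure.real]
    calc ∫⁻ x, ENNReal.ofReal (f x) ∂μ
        = ENNReal.ofReal (∫ x in P₀, (μ[f|ℱ i]) x ∂μ) := by rw [e0, e1, e2, e3]
      _ ≤ ENNReal.ofReal ((μ P₀).toReal * (2:ℝ)^k) :=
          ENNReal.ofReal_le_ofReal (by rw [← e5]; exact e4)
      _ = μ P₀ * c := by
          rw [ENNReal.ofReal_mul ENNReal.toReal_nonneg, ENNReal.ofReal_toReal hP₀fin.ne]
      _ = c * μ P₀ := mul_comm _ _
  have hεc : ε = 2 * c := by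
    rw [hε_def, hc_def, show (2:ℝ)^(k+1) = 2 * 2^k by rw [zpow_add_one₀ two_ne_zero]; ring,
      ENNReal.ofReal_mul (by norm_num)]
    norm_num
  have hc0 : c ≠ 0 := (ENNReal.ofReal_pos.2 h2k).ne'
  have hctop : c ≠ ∞ := ENNReal.ofReal_ne_top
  have hmain : 2 * μ S ≤ μ P₀ := by
    have h := hsum.trans htot
    rw [hεc] at h
    have h' : c * (2 * μ S) ≤ c * μ P₀ := by
      rw [← mul_assoc, mul_comm c 2]; exact h
    exact (ENNReal.mul_le_mul_iff_right hc0 hctop).1 h'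
  have hhalf : μ S ≤ μ P₀ / 2 :=
    (ENNReal.le_div_iff_mul_le (Or.inl two_ne_zero) (Or.inl (by norm_num))).2
      (by rwa [mul_comm] at hmain)
  have hfirst : μ (P₀ ∩ S) ≤ μ P₀ / 2 :=
    le_trans (measure_mono Set.inter_subset_right) hhalf
  refine ⟨hfirst, ?_⟩
  have hsplit : μ (P₀ ∩ S) + μ (P₀ \ S) = μ P₀ := measure_inter_add_diff P₀ hSm
  have h6 : μ P₀ ≤ μ P₀ / 2 + μ (P₀ \ S) :=
    hsplit.symm.trans_le (add_le_add_left hfirst _) |>.trans_eq rfl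
  have h7 : μ P₀ / 2 ≤ μ (P₀ \ S) := by
    have hs := ENNReal.sub_half hP₀fin.ne
    rw [← hs]
    exact tsub_le_iff_left.2 h6
  calc μ P₀ = 2 * (μ P₀ / 2) := (ENNReal.mul_div_cancel two_ne_zero (by norm_num)).symm
    _ ≤ 2 * μ (P₀ \ S) := mul_le_mul_right h7 _
end
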